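/- arXiv:1310.3520 — 6 statements merged into one kernel-verified Lean document; each statement's English description precedes it below -/
import Mathlib

section
/- Let B = [[b11, B12],[B21, B22]] be an m×n real matrix with m, n ≥ 1 (so B22 is (m-1)×(n-1)), and let a, c be nonzero real numbers. Then the (m+1)×(n+1) block matrix [[0, a, 0],[c, b11, B12],[0, B21, B22]] has rank equal to rank(B22) + 2. -/
open Matrix

noncomputable section

/-- The submodule `p.prod q` is linearly equivalent to `p × q`. -/
def subProdEquiv {R M N : Type*} [CommRing R] [AddCommGroup M] [AddCommGroup N]
    [Module R M] [Module R N] (p : Submodule R M) (q : Submodule R N) :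
    ↥(p.prod q) ≃ₗ[R] p × q where
  toFun x := (⟨x.1.1, x.2.1⟩, ⟨x.1.2, x.2.2⟩)
  invFun x := ⟨(x.1.1, x.2.1), ⟨x.1.2, x.2.2⟩⟩
  map_add' _ _ := rfl
  map_smul' _ _ := rfl
  left_inv _ := rfl
  right_inv _ := rfl

theorem range_prodMap' {R M N M' N' : Type*} [CommRing R] [AddCommGroup M] [AddCommGroup N]
    [AddCommGroup M'] [AddCommGroup N'] [Module R M] [Module R N] [Module R M'] [Module R N']
    (f : M →ₗ[R] M') (g : N →ₗ[R] N') :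
    LinearMap.range (f.prodMap g) = (LinearMap.range f).prod (LinearMap.range g) := by
  ext x
  constructor
  · rintro ⟨⟨u, v⟩, rfl⟩
    exact ⟨⟨u, rfl⟩, ⟨v, rfl⟩⟩
  · rintro ⟨⟨u, hu⟩, ⟨v, hv⟩⟩
    exact ⟨(u, v), by simp [LinearMap.prodMap_apply, hu, hv]⟩

theorem rank_fromBlocks_diag {m n o p : Type*} [Fintype m] [Fintype n] [Fintype o] [Fintype p]
    (A : Matrix m n ℝ) (D : Matrix o p ℝ) :
    (Matrix.fromBlocks A 0 0 D).rank = A.rank + D.rank := by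
  classical
  set e1 := LinearEquiv.sumArrowLequivProdArrow n p ℝ ℝ
  set e2 := LinearEquiv.sumArrowLequivProdArrow m o ℝ ℝ
  have key : (Matrix.fromBlocks A 0 0 D).mulVecLin =
      (e2.symm : ((m → ℝ) × (o → ℝ)) →ₗ[ℝ] (m ⊕ o → ℝ)) ∘ₗ
        (A.mulVecLin.prodMap D.mulVecLin) ∘ₗ (e1 : (n ⊕ p → ℝ) →ₗ[ℝ] (n → ℝ) × (p → ℝ)) := by
    apply LinearMap.ext
    intro x
    funext i
    cases i <;>
      simp [Matrix.mulVecLin_apply, Matrix.fromBlocks_mulVec, e1, e2,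
        LinearEquiv.sumArrowLequivProdArrow, Equiv.sumArrowEquivProdArrow]
  rw [Matrix.rank, key]
  rw [LinearMap.range_comp, LinearMap.range_comp_of_range_eq_top _ (LinearEquiv.range e1)]
  rw [LinearEquiv.finrank_map_eq, range_prodMap']
  rw [(subProdEquiv _ _).finrank_eq, Module.finrank_prod]
  rfl

theorem rank_reindex' {m n m₂ n₂ : Type*} [Fintype m] [Fintype n] [Fintype m₂] [Fintype n₂]
    (e₁ : m ≃ m₂) (e₂ : n ≃ n₂) (A : Matrix m n ℝ) :
    (Matrix.reindex e₁ e₂ A).rank = A.rank := by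
  rw [Matrix.rank, Matrix.rank, Matrix.mulVecLin_reindex, LinearMap.range_comp,
    LinearMap.range_comp, LinearEquiv.range, Submodule.map_top, LinearEquiv.finrank_map_eq]

/-- Bordering `B = [[b11, B12],[B21, B22]]` with a new first row `(0, a, 0)` and a new
first column `(0, c, 0)ᵀ`, with `a, c ≠ 0`, gives a matrix of rank `rank B22 + 2`. -/
theorem rank_bordered_eq (m' n' : ℕ) (b11 : ℝ)
    (B12 : Matrix (Fin 1) (Fin n') ℝ) (B21 : Matrix (Fin m') (Fin 1) ℝ)
    (B22 : Matrix (Fin m') (Fin n') ℝ) (a c : ℝ) (ha : a ≠ 0) (hc : c ≠ 0) :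
    (Matrix.fromBlocks (0 : Matrix (Fin 1) (Fin 1) ℝ)
        (Matrix.fromCols (Matrix.of fun _ _ => a) (0 : Matrix (Fin 1) (Fin n') ℝ))
        (Matrix.fromRows (Matrix.of fun _ _ => c) (0 : Matrix (Fin m') (Fin 1) ℝ))
        (Matrix.fromBlocks (Matrix.of fun _ _ => b11) B12 B21 B22)).rank =
      B22.rank + 2 := by
  classical
  -- the cleared matrix
  set N : Matrix (Fin 1 ⊕ (Fin 1 ⊕ Fin m')) (Fin 1 ⊕ (Fin 1 ⊕ Fin n')) ℝ :=
    Matrix.fromBlocks 0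
      (Matrix.fromCols (Matrix.of fun _ _ => a) 0)
      (Matrix.fromRows (Matrix.of fun _ _ => c) 0)
      (Matrix.fromBlocks 0 0 0 B22) with hN
  -- the row-operations matrix
  set P : Matrix (Fin 1 ⊕ (Fin 1 ⊕ Fin m')) (Fin 1 ⊕ (Fin 1 ⊕ Fin m')) ℝ :=
    Matrix.fromBlocks 1 0
      (Matrix.of fun i _ => Sum.elim (fun _ => b11 / a) (fun i => B21 i 0 / a) i) 1 with hP
  -- the column-operations matrix
  set Q : Matrix (Fin 1 ⊕ (Fin 1 ⊕ Fin n')) (Fin 1 ⊕ (Fin 1 ⊕ Fin n')) ℝ :=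
    Matrix.fromBlocks 1
      (Matrix.of fun _ j => Sum.elim (fun _ => (0 : ℝ)) (fun j => B12 0 j / c) j) 0 1 with hQ
  have hPdet : IsUnit P.det := by
    rw [hP, Matrix.det_fromBlocks_zero₁₂, Matrix.det_one, Matrix.det_one, mul_one]
    exact isUnit_one
  have hQdet : IsUnit Q.det := by
    rw [hQ, Matrix.det_fromBlocks_zero₂₁, Matrix.det_one, Matrix.det_one, mul_one]
    exact isUnit_one
  have hM : (Matrix.fromBlocks (0 : Matrix (Fin 1) (Fin 1) ℝ)
        (Matrix.fromCols (Matrix.of fun _ _ => a) (0 : Matrix (Fin 1) (Fin n') ℝ))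
        (Matrix.fromRows (Matrix.of fun _ _ => c) (0 : Matrix (Fin m') (Fin 1) ℝ))
        (Matrix.fromBlocks (Matrix.of fun _ _ => b11) B12 B21 B22)) = P * (N * Q) := by
    ext i j
    rcases i with i | (i | i) <;> rcases j with j | (j | j) <;>
      simp [hP, hN, hQ, Matrix.mul_apply, Fintype.sum_sum_type, Matrix.fromBlocks,
        Matrix.fromCols, Fin.sum_univ_one, Matrix.one_apply, Fin.eq_zero,
        div_mul_cancel₀, mul_div_cancel₀, ha, hc, mul_comm,
        Finset.mul_sum, Finset.sum_mul]
  rw [hM, Matrix.rank_mul_eq_right_of_isUnit_det P _ hPdet,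
    Matrix.rank_mul_eq_left_of_isUnit_det Q _ hQdet]
  -- now compute the rank of N by reindexing it to a block-diagonal matrix
  set A2 : Matrix (Fin 1 ⊕ Fin 1) (Fin 1 ⊕ Fin 1) ℝ :=
    Matrix.fromBlocks 0 (Matrix.of fun _ _ => a) (Matrix.of fun _ _ => c) 0 with hA2
  have hre : Matrix.reindex (Equiv.sumAssoc (Fin 1) (Fin 1) (Fin m'))
      (Equiv.sumAssoc (Fin 1) (Fin 1) (Fin n'))
      (Matrix.fromBlocks A2 0 0 B22) = N := by
    ext i j
    rcases i with i | (i | i) <;> rcases j with j | (j | j) <;>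
      simp [hA2, hN, Matrix.fromBlocks, Matrix.fromCols, Equiv.sumAssoc]
  rw [← hre, rank_reindex', rank_fromBlocks_diag]
  have hsq : A2 * A2 = (a * c) • (1 : Matrix (Fin 1 ⊕ Fin 1) (Fin 1 ⊕ Fin 1) ℝ) := by
    ext i j
    rcases i with i | i <;> rcases j with j | j <;>
      simp [hA2, Matrix.mul_apply, Fintype.sum_sum_type, Matrix.fromBlocks, Fin.sum_univ_one,
        Matrix.one_apply, Subsingleton.elim i j, mul_comm]
  have hac : (a * c) ≠ 0 := mul_ne_zero ha hc
  have hinv : A2 * ((a * c)⁻¹ • A2) = 1 := by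
    rw [Matrix.mul_smul, hsq, smul_smul, inv_mul_cancel₀ hac, one_smul]
  have hinv' : ((a * c)⁻¹ • A2) * A2 = 1 := by
    rw [Matrix.smul_mul, hsq, smul_smul, inv_mul_cancel₀ hac, one_smul]
  have hA2unit : IsUnit A2 := ⟨⟨A2, (a * c)⁻¹ • A2, hinv, hinv'⟩, rfl⟩
  have hA2rank : A2.rank = 2 := by
    rw [Matrix.rank_of_isUnit A2 hA2unit]
    simp
  rw [hA2rank, add_comm]
end
end

section
/- Let A = [[A11, A12],[A21, A22]] be a real block matrix where A11 is m1×n1, A12 is m1×n2, A21 is m2×n1, A22 is m2×n2. If x is a vector with A22^T x = 0 and y is a vector with A22 y = 0, then the block matrix [[0, x^T A21, 0],[A12 y, A11, A12],[0, A21, A22]] has the same rank as A. -/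
open Matrix

/-- Bordering a matrix with a zero row and zero column does not change the rank. -/
lemma rank_fromBlocks_zero_zero_zero {m n : Type*} [Fintype m] [Fintype n]
    [DecidableEq m] [DecidableEq n]
    (A : Matrix m n ℝ) :
    (fromBlocks (0 : Matrix (Fin 1) (Fin 1) ℝ) 0 0 A).rank = A.rank := by
  have h1 : fromBlocks (0 : Matrix (Fin 1) (Fin 1) ℝ) 0 0 A =
      fromRows (0 : Matrix (Fin 1) m ℝ) (1 : Matrix m m ℝ) * A *
        fromCols (0 : Matrix n (Fin 1) ℝ) (1 : Matrix n n ℝ) := by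
    rw [fromRows_mul, mul_fromCols]
    ext (i | i) (j | j) <;> simp [fromRows, fromCols] <;> rfl
  have h2 : A = fromCols (0 : Matrix m (Fin 1) ℝ) (1 : Matrix m m ℝ) *
      fromBlocks (0 : Matrix (Fin 1) (Fin 1) ℝ) 0 0 A *
        fromRows (0 : Matrix (Fin 1) n ℝ) (1 : Matrix n n ℝ) := by
    rw [fromCols_mul_fromBlocks]
    simp only [Matrix.zero_mul, Matrix.one_mul, Matrix.mul_zero, Matrix.mul_one,
      add_zero, zero_add]
    rw [fromCols_mul_fromRows]
    simp
  refine le_antisymm ?_ ?_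
  · rw [h1]
    exact le_trans (rank_mul_le_left _ _) (rank_mul_le_right _ _)
  · conv_lhs => rw [h2]
    exact le_trans (rank_mul_le_left _ _) (rank_mul_le_right _ _)

/-- If `A22ᵀ x = 0` and `A22 y = 0`, then bordering `A = [[A11, A12],[A21, A22]]` with
first row `(0, xᵀ A21, 0)` and first column `(0, A12 y, 0)ᵀ` does not change the rank. -/
theorem rank_adjoin_eq (m1 n1 m2 n2 : ℕ)
    (A11 : Matrix (Fin m1) (Fin n1) ℝ) (A12 : Matrix (Fin m1) (Fin n2) ℝ)
    (A21 : Matrix (Fin m2) (Fin n1) ℝ) (A22 : Matrix (Fin m2) (Fin n2) ℝ)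
    (x : Fin m2 → ℝ) (y : Fin n2 → ℝ)
    (hx : Matrix.mulVec (Matrix.transpose A22) x = 0) (hy : Matrix.mulVec A22 y = 0) :
    (Matrix.fromBlocks (0 : Matrix (Fin 1) (Fin 1) ℝ)
        (Matrix.fromCols (Matrix.of fun (_ : Fin 1) j => Matrix.vecMul x A21 j)
          (0 : Matrix (Fin 1) (Fin n2) ℝ))
        (Matrix.fromRows (Matrix.of fun i (_ : Fin 1) => Matrix.mulVec A12 y i)
          (0 : Matrix (Fin m2) (Fin 1) ℝ))
        (Matrix.fromBlocks A11 A12 A21 A22)).rank =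
      (Matrix.fromBlocks A11 A12 A21 A22).rank := by
  classical
  set A : Matrix (Fin m1 ⊕ Fin m2) (Fin n1 ⊕ Fin n2) ℝ := fromBlocks A11 A12 A21 A22 with hA
  set X : Matrix (Fin 1) (Fin m2) ℝ := Matrix.of fun _ i => x i with hX
  set Y : Matrix (Fin n2) (Fin 1) ℝ := Matrix.of fun i _ => y i with hY
  set u : Matrix (Fin 1) (Fin m1 ⊕ Fin m2) ℝ :=
    fromCols (0 : Matrix (Fin 1) (Fin m1) ℝ) X with hu
  set v : Matrix (Fin n1 ⊕ Fin n2) (Fin 1) ℝ :=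
    fromRows (0 : Matrix (Fin n1) (Fin 1) ℝ) Y with hv
  set E : Matrix (Fin 1 ⊕ (Fin m1 ⊕ Fin m2)) (Fin 1 ⊕ (Fin m1 ⊕ Fin m2)) ℝ :=
    fromBlocks 1 u 0 1 with hE
  set F : Matrix (Fin 1 ⊕ (Fin n1 ⊕ Fin n2)) (Fin 1 ⊕ (Fin n1 ⊕ Fin n2)) ℝ :=
    fromBlocks 1 0 v 1 with hF
  have hX21 : X * A21 = Matrix.of fun (_ : Fin 1) j => Matrix.vecMul x A21 j := by
    ext i j
    simp [hX, Matrix.mul_apply, Matrix.vecMul, dotProduct]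
  have hX22 : X * A22 = 0 := by
    ext i j
    have h := congrFun hx j
    simp only [Matrix.mulVec, dotProduct, Matrix.transpose_apply, Pi.zero_apply] at h
    simp only [hX, Matrix.mul_apply, Matrix.of_apply, Matrix.zero_apply]
    rw [← h]
    exact Finset.sum_congr rfl fun k _ => mul_comm _ _
  have h12Y : A12 * Y = Matrix.of fun i (_ : Fin 1) => Matrix.mulVec A12 y i := by
    ext i j
    simp [hY, Matrix.mul_apply, Matrix.mulVec, dotProduct]
  have h22Y : A22 * Y = 0 := by
    ext i j
    have h := congrFun hy i
    simp only [Matrix.mulVec, dotProduct, Pi.zero_apply] at h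
    simp only [hY, Matrix.mul_apply, Matrix.of_apply, Matrix.zero_apply]
    exact h
  have huA : u * A = fromCols (Matrix.of fun (_ : Fin 1) j => Matrix.vecMul x A21 j)
      (0 : Matrix (Fin 1) (Fin n2) ℝ) := by
    rw [hu, hA, fromCols_mul_fromBlocks, hX21, hX22]
    simp
  have hAv : A * v = fromRows (Matrix.of fun i (_ : Fin 1) => Matrix.mulVec A12 y i)
      (0 : Matrix (Fin m2) (Fin 1) ℝ) := by
    rw [hv, hA, fromBlocks_mul_fromRows, h12Y, h22Y]
    simp
  have huAv : u * A * v = 0 := by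
    rw [Matrix.mul_assoc, hAv, hu, fromCols_mul_fromRows]
    simp
  have key : E * (fromBlocks (0 : Matrix (Fin 1) (Fin 1) ℝ) 0 0 A) * F =
      fromBlocks 0 (fromCols (Matrix.of fun (_ : Fin 1) j => Matrix.vecMul x A21 j)
          (0 : Matrix (Fin 1) (Fin n2) ℝ))
        (fromRows (Matrix.of fun i (_ : Fin 1) => Matrix.mulVec A12 y i)
          (0 : Matrix (Fin m2) (Fin 1) ℝ)) A := by
    rw [hE, hF, fromBlocks_multiply, fromBlocks_multiply]
    simp only [Matrix.one_mul, Matrix.mul_one, Matrix.zero_mul, Matrix.mul_zero,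
      add_zero, zero_add]
    rw [huAv, huA, hAv]
  have hdetE : IsUnit E.det := by
    rw [hE, det_fromBlocks_zero₂₁]
    simp
  have hdetF : IsUnit F.det := by
    rw [hF, det_fromBlocks_zero₁₂]
    simp
  calc (fromBlocks 0 (fromCols (Matrix.of fun (_ : Fin 1) j => Matrix.vecMul x A21 j)
          (0 : Matrix (Fin 1) (Fin n2) ℝ))
        (fromRows (Matrix.of fun i (_ : Fin 1) => Matrix.mulVec A12 y i)
          (0 : Matrix (Fin m2) (Fin 1) ℝ)) A).rank
      = (E * (fromBlocks (0 : Matrix (Fin 1) (Fin 1) ℝ) 0 0 A) * F).rank := by rw [key]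
    _ = (E * (fromBlocks (0 : Matrix (Fin 1) (Fin 1) ℝ) 0 0 A)).rank :=
        rank_mul_eq_left_of_isUnit_det F _ hdetF
    _ = (fromBlocks (0 : Matrix (Fin 1) (Fin 1) ℝ) 0 0 A).rank :=
        rank_mul_eq_right_of_isUnit_det E _ hdetE
    _ = A.rank := rank_fromBlocks_zero_zero_zero A
end

section
/- Let A = [[A11, A12, 0],[A21, a22, A23],[0, A32, A33]] be a real matrix where A11 is m1×n1, A33 is m2×n2, a22 is a scalar, A12 is m1×1, A21 is 1×n1, A23 is 1×n2, A32 is m2×1. Suppose there exists v ∈ R^{m1} with v^T A11 = A21 and z ∈ R^{n1} with A11 z = A12, and similarly the row [A23] lies in the row space of A33 and the column A32 lies in the column space of A33 (equivalently, [A21 A23] x = 0 for all x ∈ ker(A11 ⊕ A33) and y^T [A12; A32] = 0 for all y ∈ ker((A11 ⊕ A33)^T)). Then rank(A) = rank([[A11, A12],[A21, v^T A11 z]]) + rank([[a22 − v^T A11 z, A23],[A32, A33]]). -/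
open Matrix Module

/-- A product submodule is linearly equivalent to the product of submodules. -/
noncomputable def submoduleProdEquivAux {R M N : Type*} [Semiring R] [AddCommMonoid M]
    [AddCommMonoid N] [Module R M] [Module R N] (p : Submodule R M) (q : Submodule R N) :
    ↥(p.prod q) ≃ₗ[R] ↥p × ↥q where
  toFun x := (⟨x.1.1, x.2.1⟩, ⟨x.1.2, x.2.2⟩)
  invFun x := ⟨(x.1.1, x.2.1), ⟨x.1.2, x.2.2⟩⟩
  map_add' _ _ := rfl
  map_smul' _ _ := rfl
  left_inv _ := rfl
  right_inv _ := rfl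

/-- Rank of a block diagonal matrix is the sum of the ranks. -/
lemma rank_fromBlocks_diag_aux {m m' n n' : Type*} [Fintype m] [Fintype m'] [Fintype n]
    [Fintype n'] (A : Matrix m n ℝ) (B : Matrix m' n' ℝ) :
    (fromBlocks A 0 0 B).rank = A.rank + B.rank := by
  have key : LinearMap.range (fromBlocks A 0 0 B).mulVecLin =
      Submodule.map
        ((LinearEquiv.sumArrowLequivProdArrow m m' ℝ ℝ).symm :
          ((m → ℝ) × (m' → ℝ)) →ₗ[ℝ] (m ⊕ m' → ℝ))
        ((LinearMap.range A.mulVecLin).prod (LinearMap.range B.mulVecLin)) := by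
    ext u
    constructor
    · rintro ⟨w, rfl⟩
      refine ⟨(A *ᵥ (w ∘ Sum.inl), B *ᵥ (w ∘ Sum.inr)), ⟨⟨_, rfl⟩, ⟨_, rfl⟩⟩, ?_⟩
      have hw : w = Sum.elim (w ∘ Sum.inl) (w ∘ Sum.inr) := by funext i; cases i <;> rfl
      rw [mulVecLin_apply]
      conv_rhs => rw [hw]
      rw [fromBlocks_mulVec]
      funext i
      cases i <;>
        simp [LinearEquiv.sumArrowLequivProdArrow_symm_apply_inl,
          LinearEquiv.sumArrowLequivProdArrow_symm_apply_inr]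
    · rintro ⟨⟨a, b⟩, ⟨⟨x, hx⟩, ⟨y, hy⟩⟩, rfl⟩
      refine ⟨Sum.elim x y, ?_⟩
      rw [mulVecLin_apply, fromBlocks_mulVec]
      simp only [mulVecLin_apply] at hx hy
      funext i
      cases i <;>
        simp [hx, hy, LinearEquiv.sumArrowLequivProdArrow_symm_apply_inl,
          LinearEquiv.sumArrowLequivProdArrow_symm_apply_inr]
  rw [Matrix.rank, key, LinearEquiv.finrank_map_eq,
    LinearEquiv.finrank_eq (submoduleProdEquivAux _ _), Module.finrank_prod]
  rfl

/-- Rank is invariant under arbitrary reindexing. -/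
lemma rank_submatrix_aux {m n m' n' : Type*} [Fintype m] [Fintype n] [Fintype m'] [Fintype n']
    (A : Matrix m n ℝ) (e : m' ≃ m) (f : n' ≃ n) :
    (A.submatrix e f).rank = A.rank := by
  rw [Matrix.rank, Matrix.rank, mulVecLin_submatrix, LinearMap.range_comp, LinearMap.range_comp,
    show LinearMap.funLeft ℝ ℝ f.symm = (LinearEquiv.funCongrLeft ℝ ℝ f.symm : _) from rfl,
    LinearEquiv.range, Submodule.map_top,
    show LinearMap.funLeft ℝ ℝ (e : m' → m) = (LinearEquiv.funCongrLeft ℝ ℝ e : _) from rfl,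
    LinearEquiv.finrank_map_eq]

/-- Case (i) of the decomposition lemma: if `A21` is in the row space of `A11`,
`A12` in the column space of `A11`, `A23` in the row space of `A33` and `A32` in the
column space of `A33`, then the rank of the 1-separated matrix splits accordingly. -/
theorem rank_one_separation_split (m1 n1 m2 n2 : ℕ)
    (A11 : Matrix (Fin m1) (Fin n1) ℝ) (A12 : Matrix (Fin m1) (Fin 1) ℝ)
    (A21 : Matrix (Fin 1) (Fin n1) ℝ) (a22 : ℝ)
    (A23 : Matrix (Fin 1) (Fin n2) ℝ) (A32 : Matrix (Fin m2) (Fin 1) ℝ)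
    (A33 : Matrix (Fin m2) (Fin n2) ℝ)
    (v : Fin m1 → ℝ) (z : Fin n1 → ℝ)
    (hv : Matrix.vecMul v A11 = A21 0)
    (hz : Matrix.mulVec A11 z = fun i => A12 i 0)
    (hw : ∃ w : Fin m2 → ℝ, Matrix.vecMul w A33 = A23 0)
    (hu : ∃ u : Fin n2 → ℝ, Matrix.mulVec A33 u = fun i => A32 i 0) :
    (Matrix.fromBlocks
        (Matrix.fromBlocks A11 A12 A21 (Matrix.of fun (_ : Fin 1) (_ : Fin 1) => a22))
        (Matrix.fromRows (0 : Matrix (Fin m1) (Fin n2) ℝ) A23)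
        (Matrix.fromCols (0 : Matrix (Fin m2) (Fin n1) ℝ) A32) A33).rank =
      (Matrix.fromBlocks A11 A12 A21
          (Matrix.of fun (_ : Fin 1) (_ : Fin 1) => dotProduct v (Matrix.mulVec A11 z))).rank +
        (Matrix.fromBlocks
          (Matrix.of fun (_ : Fin 1) (_ : Fin 1) => a22 - dotProduct v (Matrix.mulVec A11 z))
          A23 A32 A33).rank := by
  clear hw hu
  set s : ℝ := dotProduct v (Matrix.mulVec A11 z) with hs
  set Vr : Matrix (Fin 1) (Fin m1) ℝ := Matrix.of fun _ i => v i with hVr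
  set Zc : Matrix (Fin n1) (Fin 1) ℝ := Matrix.of fun i _ => z i with hZc
  -- basic multiplication facts
  have hVA : Vr * A11 = A21 := by
    ext i j
    have : i = 0 := Subsingleton.elim _ _
    subst this
    simp [Matrix.mul_apply, hVr, ← hv, Matrix.vecMul, dotProduct]
  have hAZ : A11 * Zc = A12 := by
    ext i j
    have : j = 0 := Subsingleton.elim _ _
    subst this
    have := congrFun hz i
    simp only [Matrix.mulVec, dotProduct] at this
    simp [Matrix.mul_apply, hZc, this]
  have hVA12 : Vr * A12 = Matrix.of fun (_ : Fin 1) (_ : Fin 1) => s := by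
    ext i j
    have : i = 0 := Subsingleton.elim _ _
    subst this
    have : j = 0 := Subsingleton.elim _ _
    subst this
    simp only [Matrix.mul_apply, hVr, Matrix.of_apply, hs, dotProduct, hz]
  -- elementary matrices
  set L1 : Matrix (Fin m1 ⊕ Fin 1) (Fin m1 ⊕ Fin 1) ℝ := fromBlocks 1 0 (-Vr) 1 with hL1
  set R1 : Matrix (Fin n1 ⊕ Fin 1) (Fin n1 ⊕ Fin 1) ℝ := fromBlocks 1 (-Zc) 0 1 with hR1
  have hdetL1 : IsUnit L1.det := by
    rw [hL1, Matrix.det_fromBlocks_zero₁₂]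
    simp
  have hdetR1 : IsUnit R1.det := by
    rw [hR1, Matrix.det_fromBlocks_zero₂₁]
    simp
  -- small matrix reduction
  have hsmall : L1 * (Matrix.fromBlocks A11 A12 A21
      (Matrix.of fun (_ : Fin 1) (_ : Fin 1) => s)) * R1 =
      fromBlocks A11 0 0 (0 : Matrix (Fin 1) (Fin 1) ℝ) := by
    rw [hL1, hR1, Matrix.fromBlocks_multiply, Matrix.fromBlocks_multiply]
    simp [Matrix.neg_mul, Matrix.mul_neg, hVA, hAZ, hVA12]
  have hranksmall : (Matrix.fromBlocks A11 A12 A21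
      (Matrix.of fun (_ : Fin 1) (_ : Fin 1) => s)).rank = A11.rank := by
    have h1 := Matrix.rank_mul_eq_left_of_isUnit_det R1
      (L1 * (Matrix.fromBlocks A11 A12 A21 (Matrix.of fun (_ : Fin 1) (_ : Fin 1) => s))) hdetR1
    have h2 := Matrix.rank_mul_eq_right_of_isUnit_det L1
      (Matrix.fromBlocks A11 A12 A21 (Matrix.of fun (_ : Fin 1) (_ : Fin 1) => s)) hdetL1
    rw [hsmall] at h1
    rw [← h2, ← h1, rank_fromBlocks_diag_aux, Matrix.rank_zero, add_zero]
  -- big matrix reduction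
  set C : Matrix (Fin 1 ⊕ Fin m2) (Fin 1 ⊕ Fin n2) ℝ :=
    Matrix.fromBlocks (Matrix.of fun (_ : Fin 1) (_ : Fin 1) => a22 - s) A23 A32 A33 with hC
  set A : Matrix ((Fin m1 ⊕ Fin 1) ⊕ Fin m2) ((Fin n1 ⊕ Fin 1) ⊕ Fin n2) ℝ :=
    Matrix.fromBlocks
      (Matrix.fromBlocks A11 A12 A21 (Matrix.of fun (_ : Fin 1) (_ : Fin 1) => a22))
      (Matrix.fromRows (0 : Matrix (Fin m1) (Fin n2) ℝ) A23)
      (Matrix.fromCols (0 : Matrix (Fin m2) (Fin n1) ℝ) A32) A33 with hA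
  set L : Matrix ((Fin m1 ⊕ Fin 1) ⊕ Fin m2) ((Fin m1 ⊕ Fin 1) ⊕ Fin m2) ℝ :=
    fromBlocks L1 0 0 1 with hL
  set R : Matrix ((Fin n1 ⊕ Fin 1) ⊕ Fin n2) ((Fin n1 ⊕ Fin 1) ⊕ Fin n2) ℝ :=
    fromBlocks R1 0 0 1 with hR
  have hdetL : IsUnit L.det := by
    rw [hL, Matrix.det_fromBlocks_zero₁₂, Matrix.det_one, mul_one]
    exact hdetL1
  have hdetR : IsUnit R.det := by
    rw [hR, Matrix.det_fromBlocks_zero₁₂, Matrix.det_one, mul_one]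
    exact hdetR1
  have hbig : L * A * R =
      Matrix.fromBlocks (fromBlocks A11 0 0 (Matrix.of fun (_ : Fin 1) (_ : Fin 1) => a22 - s))
        (Matrix.fromRows (0 : Matrix (Fin m1) (Fin n2) ℝ) A23)
        (Matrix.fromCols (0 : Matrix (Fin m2) (Fin n1) ℝ) A32) A33 := by
    have e1 : L1 * Matrix.fromRows (0 : Matrix (Fin m1) (Fin n2) ℝ) A23 =
        Matrix.fromRows (0 : Matrix (Fin m1) (Fin n2) ℝ) A23 := by
      rw [hL1, Matrix.fromBlocks_mul_fromRows]
      simp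
    have e2 : Matrix.fromCols (0 : Matrix (Fin m2) (Fin n1) ℝ) A32 * R1 =
        Matrix.fromCols (0 : Matrix (Fin m2) (Fin n1) ℝ) A32 := by
      rw [hR1, Matrix.fromCols_mul_fromBlocks]
      simp
    have e3 : L1 * (Matrix.fromBlocks A11 A12 A21 (Matrix.of fun (_ : Fin 1) (_ : Fin 1) => a22))
        * R1 = fromBlocks A11 0 0 (Matrix.of fun (_ : Fin 1) (_ : Fin 1) => a22 - s) := by
      rw [hL1, hR1, Matrix.fromBlocks_multiply, Matrix.fromBlocks_multiply]
      simp only [Matrix.one_mul, Matrix.mul_one, Matrix.zero_mul, Matrix.mul_zero,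
        add_zero, zero_add, Matrix.neg_mul, Matrix.mul_neg, hVA, hAZ, hVA12, neg_add_cancel]
      ext i j
      rcases i with i | i <;> rcases j with j | j <;> simp [sub_eq_neg_add]
    rw [hL, hR, hA, Matrix.fromBlocks_multiply, Matrix.fromBlocks_multiply]
    simp only [Matrix.mul_zero, Matrix.zero_mul, Matrix.mul_one, Matrix.one_mul,
      add_zero, zero_add]
    rw [e1, e2, e3]
  -- rank of the big matrix
  have hrankbig : A.rank = A11.rank + C.rank := by
    have h1 := Matrix.rank_mul_eq_left_of_isUnit_det R (L * A) hdetR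
    have h2 := Matrix.rank_mul_eq_right_of_isUnit_det L A hdetL
    rw [hbig] at h1
    set A' : Matrix ((Fin m1 ⊕ Fin 1) ⊕ Fin m2) ((Fin n1 ⊕ Fin 1) ⊕ Fin n2) ℝ :=
      Matrix.fromBlocks (fromBlocks A11 0 0 (Matrix.of fun (_ : Fin 1) (_ : Fin 1) => a22 - s))
        (Matrix.fromRows (0 : Matrix (Fin m1) (Fin n2) ℝ) A23)
        (Matrix.fromCols (0 : Matrix (Fin m2) (Fin n1) ℝ) A32) A33 with hA'
    have hsub : A'.submatrix (Equiv.sumAssoc (Fin m1) (Fin 1) (Fin m2)).symm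
        (Equiv.sumAssoc (Fin n1) (Fin 1) (Fin n2)).symm = fromBlocks A11 0 0 C := by
      ext i j
      rcases i with i | i | i <;> rcases j with j | j | j <;>
        simp [hA', hC, Matrix.fromBlocks, Matrix.fromRows_apply_inl, Matrix.fromRows_apply_inr, Matrix.fromCols,
          Equiv.sumAssoc]
    have := rank_submatrix_aux A' (Equiv.sumAssoc (Fin m1) (Fin 1) (Fin m2)).symm
      (Equiv.sumAssoc (Fin n1) (Fin 1) (Fin n2)).symm
    rw [hsub, rank_fromBlocks_diag_aux] at this
    rw [← h2, ← h1, ← this]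
  rw [hrankbig, hranksmall]
end

section
/- Let A = [[A11, A12, 0],[A21, a22, A23],[0, A32, A33]] be a real matrix where A11 is m1×n1, A33 is m2×n2, a22 is a scalar, A12 is m1×1, A21 is 1×n1, A23 is 1×n2, A32 is m2×1. Suppose there exists x in ker(A11 ⊕ A33) with [A21 A23] x ≠ 0 and there exists y in ker((A11 ⊕ A33)^T) with y^T [A12; A32] ≠ 0. Then rank(A) = rank(A11) + rank(A33) + 2. -/
open Matrix Submodule Module

/-- Adding the span of a vector not in `W` increases finrank by one. -/
lemma finrank_sup_span_of_not_mem' {V : Type*} [AddCommGroup V] [Module ℝ V]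
    [FiniteDimensional ℝ V] (W : Submodule ℝ V) (v : V) (hv : v ∉ W) :
    finrank ℝ ↥(W ⊔ span ℝ {v}) = finrank ℝ ↥W + 1 := by
  have hdisj : W ⊓ span ℝ {v} = ⊥ := by
    rw [eq_bot_iff]
    rintro z ⟨hzW, hzs⟩
    rcases mem_span_singleton.mp hzs with ⟨t, rfl⟩
    rcases eq_or_ne t 0 with rfl | ht
    · simp
    · exact absurd ((W.smul_mem_iff ht).mp hzW) hv
  have h := Submodule.finrank_sup_add_finrank_inf_eq W (span ℝ {v})
  have hv0 : v ≠ 0 := fun h0 => hv (h0 ▸ W.zero_mem)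
  rw [hdisj, finrank_bot, finrank_span_singleton hv0, add_zero] at h
  exact h

/-- Case (iv) of the decomposition lemma: if some `x ∈ ker(A11 ⊕ A33)` has
`[A21 A23] x ≠ 0` and some `y ∈ ker((A11 ⊕ A33)ᵀ)` has `yᵀ [A12; A32] ≠ 0`,
then `rank A = rank A11 + rank A33 + 2`. -/
theorem rank_one_separation_plus_two (m1 n1 m2 n2 : ℕ)
    (A11 : Matrix (Fin m1) (Fin n1) ℝ) (A12 : Matrix (Fin m1) (Fin 1) ℝ)
    (A21 : Matrix (Fin 1) (Fin n1) ℝ) (a22 : ℝ)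
    (A23 : Matrix (Fin 1) (Fin n2) ℝ) (A32 : Matrix (Fin m2) (Fin 1) ℝ)
    (A33 : Matrix (Fin m2) (Fin n2) ℝ)
    (h1 : ∃ x : Fin n1 ⊕ Fin n2 → ℝ,
      Matrix.mulVec (Matrix.fromBlocks A11 0 0 A33) x = 0 ∧
        Matrix.mulVec (Matrix.fromCols A21 A23) x ≠ 0)
    (h2 : ∃ y : Fin m1 ⊕ Fin m2 → ℝ,
      Matrix.vecMul y (Matrix.fromBlocks A11 0 0 A33) = 0 ∧
        Matrix.vecMul y (Matrix.fromRows A12 A32) ≠ 0) :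
    (Matrix.fromBlocks
        (Matrix.fromBlocks A11 A12 A21 (Matrix.of fun (_ : Fin 1) (_ : Fin 1) => a22))
        (Matrix.fromRows (0 : Matrix (Fin m1) (Fin n2) ℝ) A23)
        (Matrix.fromCols (0 : Matrix (Fin m2) (Fin n1) ℝ) A32) A33).rank =
      A11.rank + A33.rank + 2 := by
  classical
  obtain ⟨x, hx, hrx⟩ := h1
  obtain ⟨y, hy, hyc⟩ := h2
  set M : Matrix ((Fin m1 ⊕ Fin 1) ⊕ Fin m2) ((Fin n1 ⊕ Fin 1) ⊕ Fin n2) ℝ :=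
    Matrix.fromBlocks
      (Matrix.fromBlocks A11 A12 A21 (Matrix.of fun (_ : Fin 1) (_ : Fin 1) => a22))
      (Matrix.fromRows (0 : Matrix (Fin m1) (Fin n2) ℝ) A23)
      (Matrix.fromCols (0 : Matrix (Fin m2) (Fin n1) ℝ) A32) A33 with hM
  -- embeddings of the two coordinate blocks of rows
  let φ1 : (Fin m1 → ℝ) →ₗ[ℝ] ((Fin m1 ⊕ Fin 1) ⊕ Fin m2 → ℝ) :=
    { toFun := fun u => Sum.elim (Sum.elim u 0) 0
      map_add' := by intro u v; funext i; rcases i with (i | k) | j <;> simp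
      map_smul' := by intro s u; funext i; rcases i with (i | k) | j <;> simp }
  let φ2 : (Fin m2 → ℝ) →ₗ[ℝ] ((Fin m1 ⊕ Fin 1) ⊕ Fin m2 → ℝ) :=
    { toFun := fun u => Sum.elim 0 u
      map_add' := by intro u v; funext i; rcases i with (i | k) | j <;> simp
      map_smul' := by intro s u; funext i; rcases i with (i | k) | j <;> simp }
  let e : (Fin m1 ⊕ Fin 1) ⊕ Fin m2 → ℝ := Sum.elim (Sum.elim 0 1) 0
  let cv : (Fin m1 ⊕ Fin 1) ⊕ Fin m2 → ℝ :=
    Sum.elim (Sum.elim (fun i => A12 i 0) 0) (fun i => A32 i 0)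
  set W1 : Submodule ℝ ((Fin m1 ⊕ Fin 1) ⊕ Fin m2 → ℝ) :=
    (LinearMap.range A11.mulVecLin).map φ1 with hW1
  set W2 : Submodule ℝ ((Fin m1 ⊕ Fin 1) ⊕ Fin m2 → ℝ) :=
    (LinearMap.range A33.mulVecLin).map φ2 with hW2
  -- master formula for M *ᵥ (arbitrary vector)
  have master : ∀ (w1 : Fin n1 → ℝ) (w2 : Fin 1 → ℝ) (v : Fin n2 → ℝ),
      M *ᵥ (Sum.elim (Sum.elim w1 w2) v) =
        φ1 (A11 *ᵥ w1) + φ2 (A33 *ᵥ v) + w2 0 • cv +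
          ((A21 *ᵥ w1) 0 + a22 * w2 0 + (A23 *ᵥ v) 0) • e := by
    intro w1 w2 v
    rw [hM, Matrix.fromBlocks_mulVec]
    funext i
    rcases i with (i | k) | j
    · simp [Matrix.fromBlocks_mulVec, Matrix.fromRows_mulVec, φ1, φ2, e, cv,
        Matrix.mulVec, dotProduct, Fin.sum_univ_one]
      ring
    · obtain rfl : k = 0 := Subsingleton.elim k 0
      simp [Matrix.fromBlocks_mulVec, Matrix.fromRows_mulVec, φ1, φ2, e, cv,
        Matrix.mulVec, dotProduct, Fin.sum_univ_one]
    · simp [Matrix.fromCols_mulVec_sumElim, φ1, φ2, e, cv,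
        Matrix.mulVec, dotProduct, Fin.sum_univ_one]
      ring
  -- decompose x
  set x1 : Fin n1 → ℝ := fun i => x (Sum.inl i) with hx1def
  set x2 : Fin n2 → ℝ := fun i => x (Sum.inr i) with hx2def
  have hxe : x = Sum.elim x1 x2 := by funext i; cases i <;> rfl
  rw [hxe, Matrix.fromBlocks_mulVec] at hx
  have hx1 : A11 *ᵥ x1 = 0 := by
    funext i; have := congrFun hx (Sum.inl i); simpa using this
  have hx2 : A33 *ᵥ x2 = 0 := by
    funext i; have := congrFun hx (Sum.inr i); simpa using this
  rw [hxe, Matrix.fromCols_mulVec_sumElim] at hrx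
  have ht0 : (A21 *ᵥ x1) 0 + (A23 *ᵥ x2) 0 ≠ 0 := by
    intro h0
    apply hrx
    funext k
    obtain rfl : k = 0 := Subsingleton.elim k 0
    simpa using h0
  -- decompose y
  set y1 : Fin m1 → ℝ := fun i => y (Sum.inl i) with hy1def
  set y2 : Fin m2 → ℝ := fun i => y (Sum.inr i) with hy2def
  have hye : y = Sum.elim y1 y2 := by funext i; cases i <;> rfl
  rw [hye, Matrix.vecMul_fromBlocks] at hy
  have hy1 : y1 ᵥ* A11 = 0 := by
    funext i; have := congrFun hy (Sum.inl i); simpa using this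
  have hy2 : y2 ᵥ* A33 = 0 := by
    funext i; have := congrFun hy (Sum.inr i); simpa using this
  rw [hye, Matrix.sumElim_vecMul_fromRows] at hyc
  have hs0 : (y1 ᵥ* A12) 0 + (y2 ᵥ* A32) 0 ≠ 0 := by
    intro h0
    apply hyc
    funext k
    obtain rfl : k = 0 := Subsingleton.elim k 0
    simpa using h0
  -- e is in the range
  have he : e ∈ LinearMap.range M.mulVecLin := by
    refine ⟨((A21 *ᵥ x1) 0 + (A23 *ᵥ x2) 0)⁻¹ • (Sum.elim (Sum.elim x1 0) x2), ?_⟩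
    rw [_root_.map_smul, Matrix.mulVecLin_apply, master]
    simp only [hx1, hx2, map_zero, Pi.zero_apply, zero_smul, zero_add, add_zero,
      mul_zero]
    rw [smul_smul, inv_mul_cancel₀ ht0, one_smul]
  -- cv is in the range
  have hcv : cv ∈ LinearMap.range M.mulVecLin := by
    have hcveq : cv = M.mulVecLin (Sum.elim (Sum.elim 0 1) 0) - a22 • e := by
      simp only [Matrix.mulVecLin_apply]; rw [master]
      simp [Matrix.mulVec_zero]
    rw [hcveq]
    exact sub_mem (LinearMap.mem_range_self _ _) (smul_mem _ _ he)
  -- key : range decomposition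
  have key : LinearMap.range M.mulVecLin =
      ((W1 ⊔ W2) ⊔ span ℝ {cv}) ⊔ span ℝ {e} := by
    apply le_antisymm
    · rintro z ⟨w, rfl⟩
      have hw : w = Sum.elim (Sum.elim (fun i => w (Sum.inl (Sum.inl i)))
          (fun k => w (Sum.inl (Sum.inr k)))) (fun j => w (Sum.inr j)) := by
        funext i; rcases i with (i | k) | j <;> rfl
      rw [Matrix.mulVecLin_apply, hw, master]
      refine add_mem (add_mem (add_mem ?_ ?_) ?_) ?_
      · exact mem_sup_left (mem_sup_left (mem_sup_left
          (mem_map_of_mem (LinearMap.mem_range_self _ _))))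
      · exact mem_sup_left (mem_sup_left (mem_sup_right
          (mem_map_of_mem (LinearMap.mem_range_self _ _))))
      · exact smul_mem _ _ (mem_sup_left (mem_sup_right (mem_span_singleton_self cv)))
      · exact smul_mem _ _ (mem_sup_right (mem_span_singleton_self e))
    · refine sup_le (sup_le (sup_le ?_ ?_) ?_) ?_
      · rintro z hz
        rcases mem_map.mp hz with ⟨u, ⟨w1, rfl⟩, rfl⟩
        have : φ1 (A11.mulVecLin w1) =
            M.mulVecLin (Sum.elim (Sum.elim w1 0) 0) -
              ((A21 *ᵥ w1) 0 + a22 * (0 : Fin 1 → ℝ) 0 + (A23 *ᵥ (0 : Fin n2 → ℝ)) 0) • e := by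
          simp only [Matrix.mulVecLin_apply]; rw [master]
          simp [Matrix.mulVec_zero]
        rw [this]
        exact sub_mem (LinearMap.mem_range_self _ _) (smul_mem _ _ he)
      · rintro z hz
        rcases mem_map.mp hz with ⟨u, ⟨w2, rfl⟩, rfl⟩
        have : φ2 (A33.mulVecLin w2) =
            M.mulVecLin (Sum.elim (Sum.elim 0 0) w2) -
              ((A21 *ᵥ (0 : Fin n1 → ℝ)) 0 + a22 * (0 : Fin 1 → ℝ) 0 + (A23 *ᵥ w2) 0) • e := by
          simp only [Matrix.mulVecLin_apply]; rw [master]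
          simp [Matrix.mulVec_zero]
        rw [this]
        exact sub_mem (LinearMap.mem_range_self _ _) (smul_mem _ _ he)
      · exact (span_singleton_le_iff_mem cv _).mpr hcv
      · exact (span_singleton_le_iff_mem e _).mpr he
  -- injectivity of the embeddings
  have hφ1inj : Function.Injective φ1 := by
    intro u v h
    funext i
    exact congrFun h (Sum.inl (Sum.inl i))
  have hφ2inj : Function.Injective φ2 := by
    intro u v h
    funext i
    exact congrFun h (Sum.inr i)
  -- cv not in W1 ⊔ W2
  have hcvnot : cv ∉ W1 ⊔ W2 := by
    intro hmem
    rcases mem_sup.mp hmem with ⟨p, hp, q, hq, hpq⟩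
    rcases mem_map.mp hp with ⟨u, ⟨z1, rfl⟩, rfl⟩
    rcases mem_map.mp hq with ⟨u', ⟨z2, rfl⟩, rfl⟩
    have hcol1 : A11 *ᵥ z1 = fun i => A12 i 0 := by
      funext i
      have := congrFun hpq (Sum.inl (Sum.inl i))
      simpa [φ1, φ2, cv] using this
    have hcol2 : A33 *ᵥ z2 = fun i => A32 i 0 := by
      funext i
      have := congrFun hpq (Sum.inr i)
      simpa [φ1, φ2, cv] using this
    apply hs0
    have e1 : (y1 ᵥ* A12) 0 = y1 ⬝ᵥ (A11 *ᵥ z1) := by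
      rw [hcol1]
      simp [Matrix.vecMul, dotProduct]
    have e2 : (y2 ᵥ* A32) 0 = y2 ⬝ᵥ (A33 *ᵥ z2) := by
      rw [hcol2]
      simp [Matrix.vecMul, dotProduct]
    rw [e1, e2, Matrix.dotProduct_mulVec, Matrix.dotProduct_mulVec, hy1, hy2]
    simp
  -- e not in (W1 ⊔ W2) ⊔ span cv
  have henot : e ∉ (W1 ⊔ W2) ⊔ span ℝ {cv} := by
    intro hmem
    rcases mem_sup.mp hmem with ⟨p, hp, q, hq, hpq⟩
    rcases mem_sup.mp hp with ⟨p1, hp1, p2, hp2, rfl⟩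
    rcases mem_map.mp hp1 with ⟨u, _, rfl⟩
    rcases mem_map.mp hp2 with ⟨u', _, rfl⟩
    rcases mem_span_singleton.mp hq with ⟨t, rfl⟩
    have := congrFun hpq (Sum.inl (Sum.inr 0))
    simp [φ1, φ2, cv, e] at this
  -- W1 and W2 are disjoint
  have hinf : W1 ⊓ W2 = ⊥ := by
    rw [eq_bot_iff]
    rintro z ⟨hz1, hz2⟩
    rcases mem_map.mp hz1 with ⟨u, _, rfl⟩
    rcases mem_map.mp hz2 with ⟨u', _, h21⟩
    funext i
    rcases i with (i | k) | j
    · have := congrFun h21 (Sum.inl (Sum.inl i))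
      simpa [φ1, φ2] using this.symm
    · simp [φ1]
    · simp [φ1]
  -- finrank of W1 ⊔ W2
  have hrk1 : finrank ℝ ↥W1 = A11.rank := by
    rw [hW1, Matrix.rank]
    exact (LinearEquiv.finrank_eq
      (Submodule.equivMapOfInjective φ1 hφ1inj (LinearMap.range A11.mulVecLin))).symm
  have hrk2 : finrank ℝ ↥W2 = A33.rank := by
    rw [hW2, Matrix.rank]
    exact (LinearEquiv.finrank_eq
      (Submodule.equivMapOfInjective φ2 hφ2inj (LinearMap.range A33.mulVecLin))).symm
  have hW12 : finrank ℝ ↥(W1 ⊔ W2) = A11.rank + A33.rank := by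
    have h := Submodule.finrank_sup_add_finrank_inf_eq W1 W2
    rw [hinf, finrank_bot, add_zero, hrk1, hrk2] at h
    exact h
  -- conclude
  rw [Matrix.rank, key,
    finrank_sup_span_of_not_mem' _ e henot,
    finrank_sup_span_of_not_mem' _ cv hcvnot,
    hW12]
end

section
/- Let A = [[A11, A12, 0],[A21, a22, A23],[0, A32, A33]] be a real matrix with a 1-separation (A11 is m1×n1, A33 is m2×n2, a22 a scalar, A12 an m1×1 column, A21 a 1×n1 row, A23 a 1×n2 row, A32 an m2×1 column). Then at least one of the following holds: (i) there exist v ∈ R^{m1} and z ∈ R^{n1} such that rank(A) = rank([[A11, A12],[A21, v^T A11 z]]) + rank([[a22 − v^T A11 z, A23],[A32, A33]]); (ii) rank(A) = rank([A11; A21]) + rank([A23; A33]) + 1; (iii) rank(A) = rank([A11 A12]) + rank([A32 A33]) + 1; (iv) rank(A) = rank(A11) + rank(A33) + 2. -/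
set_option linter.unusedSectionVars false

open Matrix Module Submodule

namespace OneSepAux

variable {m n p q : Type*} [Fintype m] [Fintype n] [Fintype p] [Fintype q]

/-- Extend-by-zero on the left summand, as a linear map. -/
def padL (m p : Type*) : (m → ℝ) →ₗ[ℝ] (m ⊕ p → ℝ) where
  toFun x := Sum.elim x 0
  map_add' x y := by ext (i | i) <;> simp
  map_smul' c x := by ext (i | i) <;> simp

/-- Extend-by-zero on the right summand, as a linear map. -/
def padR (m p : Type*) : (p → ℝ) →ₗ[ℝ] (m ⊕ p → ℝ) where
  toFun x := Sum.elim 0 x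
  map_add' x y := by ext (i | i) <;> simp
  map_smul' c x := by ext (i | i) <;> simp

lemma padL_inj : Function.Injective (padL m p) := by
  intro x y h
  funext i
  exact congrFun h (Sum.inl i)

lemma padR_inj : Function.Injective (padR m p) := by
  intro x y h
  funext i
  exact congrFun h (Sum.inr i)

lemma rank_eq_of_comp (M : Matrix m n ℝ) (N : Matrix p n ℝ)
    (g : (m → ℝ) →ₗ[ℝ] (p → ℝ)) (hg : Function.Injective g)
    (h : N.mulVecLin = g ∘ₗ M.mulVecLin) : N.rank = M.rank := by
  rw [Matrix.rank, Matrix.rank, h, LinearMap.range_comp]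
  exact (Submodule.equivMapOfInjective g hg _).finrank_eq.symm

lemma rank_fromRows_zero_right (M : Matrix m n ℝ) :
    (fromRows M (0 : Matrix p n ℝ)).rank = M.rank := by
  refine rank_eq_of_comp M _ (padL m p) padL_inj ?_
  apply LinearMap.ext
  intro x
  simp [padL, mulVecLin_apply, fromRows_mulVec]

lemma rank_fromRows_zero_left (M : Matrix p n ℝ) :
    (fromRows (0 : Matrix m n ℝ) M).rank = M.rank := by
  refine rank_eq_of_comp M _ (padR m p) padR_inj ?_
  apply LinearMap.ext
  intro x
  simp [padR, mulVecLin_apply, fromRows_mulVec]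

lemma range_fromColumns (X : Matrix m n ℝ) (Y : Matrix m p ℝ) :
    LinearMap.range (fromCols X Y).mulVecLin =
      LinearMap.range X.mulVecLin ⊔ LinearMap.range Y.mulVecLin := by
  apply le_antisymm
  · rintro v ⟨u, rfl⟩
    rw [mulVecLin_apply, ← Sum.elim_comp_inl_inr u, fromCols_mulVec_sumElim]
    exact Submodule.add_mem_sup ⟨_, rfl⟩ ⟨_, rfl⟩
  · rw [sup_le_iff]
    constructor
    · rintro v ⟨u, rfl⟩
      exact ⟨Sum.elim u 0, by simp [mulVecLin_apply]⟩
    · rintro v ⟨u, rfl⟩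
      exact ⟨Sum.elim 0 u, by simp [mulVecLin_apply]⟩

lemma finrank_sup_of_disjoint {V : Type*} [AddCommGroup V] [Module ℝ V]
    (U W : Submodule ℝ V) [FiniteDimensional ℝ U] [FiniteDimensional ℝ W]
    (h : Disjoint U W) :
    finrank ℝ ((U ⊔ W : Submodule ℝ V) : Type _) = finrank ℝ U + finrank ℝ W := by
  have := Submodule.finrank_sup_add_finrank_inf_eq U W
  rw [h.eq_bot, finrank_bot] at this
  simpa using this

lemma rank_fromBlocks_diag (B : Matrix m n ℝ) (C : Matrix p q ℝ) :
    (fromBlocks B 0 0 C).rank = B.rank + C.rank := by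
  have h1 : fromBlocks B (0 : Matrix m q ℝ) (0 : Matrix p n ℝ) C
      = fromCols (fromRows B 0) (fromRows 0 C) := by
    rw [fromCols_fromRows_eq_fromBlocks]
  rw [h1, Matrix.rank, range_fromColumns]
  have hdisj : Disjoint (LinearMap.range (fromRows B (0 : Matrix p n ℝ)).mulVecLin)
      (LinearMap.range (fromRows (0 : Matrix m q ℝ) C).mulVecLin) := by
    rw [Submodule.disjoint_def]
    rintro x ⟨u, rfl⟩ ⟨w, hw⟩
    simp only [mulVecLin_apply, fromRows_mulVec] at hw ⊢
    funext i
    rcases i with i | i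
    · have := congrFun hw (Sum.inl i)
      simp only [Sum.elim_inl, zero_mulVec, Pi.zero_apply] at this ⊢
      rw [← this]
    · simp
  rw [finrank_sup_of_disjoint _ _ hdisj]
  have e1 : finrank ℝ (LinearMap.range (fromRows B (0 : Matrix p n ℝ)).mulVecLin)
      = (fromRows B (0 : Matrix p n ℝ)).rank := rfl
  have e2 : finrank ℝ (LinearMap.range (fromRows (0 : Matrix m q ℝ) C).mulVecLin)
      = (fromRows (0 : Matrix m q ℝ) C).rank := rfl
  rw [e1, e2, rank_fromRows_zero_right, rank_fromRows_zero_left]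

lemma rank_add_le (A B : Matrix m n ℝ) : (A + B).rank ≤ A.rank + B.rank := by
  rw [Matrix.rank]
  have hle : LinearMap.range (A + B).mulVecLin ≤
      LinearMap.range A.mulVecLin ⊔ LinearMap.range B.mulVecLin := by
    rintro v ⟨u, rfl⟩
    rw [mulVecLin_apply, Matrix.add_mulVec]
    exact Submodule.add_mem_sup ⟨u, rfl⟩ ⟨u, rfl⟩
  exact (Submodule.finrank_mono hle).trans
    (Submodule.finrank_add_le_finrank_add_finrank _ _)

lemma rank_reindex' {m' n' : Type*} [Fintype m'] [Fintype n']
    (e₁ : m ≃ m') (e₂ : n ≃ n') (M : Matrix m n ℝ) :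
    (reindex e₁ e₂ M).rank = M.rank := by
  rw [Matrix.rank, Matrix.rank, mulVecLin_reindex, LinearMap.range_comp, LinearMap.range_comp,
    LinearEquiv.range, Submodule.map_top, LinearEquiv.finrank_map_eq]



variable {a b c : Type*} [Fintype a] [Fintype b] [Fintype c]


variable {a b c n : Type*} [Fintype a] [Fintype b] [Fintype c] [Fintype n]

def padMid (a b c : Type*) : (b ⊕ c → ℝ) →ₗ[ℝ] ((a ⊕ b) ⊕ c → ℝ) where
  toFun x := Sum.elim (Sum.elim 0 (fun j => x (Sum.inl j))) (fun j => x (Sum.inr j))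
  map_add' x y := by ext ((i | i) | i) <;> simp
  map_smul' r x := by ext ((i | i) | i) <;> simp

lemma padMid_inj : Function.Injective (padMid a b c) := by
  intro x y h
  funext i
  rcases i with i | i
  · exact congrFun h (Sum.inl (Sum.inr i))
  · exact congrFun h (Sum.inr i)

lemma rank_fromRows_mid (B : Matrix b n ℝ) (C : Matrix c n ℝ) :
    (fromRows (fromRows (0 : Matrix a n ℝ) B) C).rank = (fromRows B C).rank := by
  refine rank_eq_of_comp (fromRows B C) _ (padMid a b c) padMid_inj ?_
  apply LinearMap.ext
  intro x
  funext i
  rcases i with (i | i) | i <;>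
    simp [padMid, mulVecLin_apply, fromRows_mulVec]


section LemII

variable (m1 n1 m2 n2 : ℕ)
variable (A11 : Matrix (Fin m1) (Fin n1) ℝ) (A12 : Matrix (Fin m1) (Fin 1) ℝ)
  (A21 : Matrix (Fin 1) (Fin n1) ℝ) (a22 : ℝ)
  (A23 : Matrix (Fin 1) (Fin n2) ℝ) (A32 : Matrix (Fin m2) (Fin 1) ℝ)
  (A33 : Matrix (Fin m2) (Fin n2) ℝ)

lemma lemII
    (hg : (¬∃ z, A11 *ᵥ z = fun i => A12 i 0) ∨ (¬∃ y, A33 *ᵥ y = fun i => A32 i 0))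
    (hk : (∀ u, A11 *ᵥ u = 0 → A21 *ᵥ u = 0) ∨ (∀ w, A33 *ᵥ w = 0 → A23 *ᵥ w = 0)) :
    (Matrix.fromBlocks
        (Matrix.fromBlocks A11 A12 A21 (Matrix.of fun (_ : Fin 1) (_ : Fin 1) => a22))
        (Matrix.fromRows (0 : Matrix (Fin m1) (Fin n2) ℝ) A23)
        (Matrix.fromCols (0 : Matrix (Fin m2) (Fin n1) ℝ) A32) A33).rank =
      (Matrix.fromRows A11 A21).rank + (Matrix.fromRows A23 A33).rank + 1 := by
  classical
  set M1 : Matrix ((Fin m1 ⊕ Fin 1) ⊕ Fin m2) (Fin n1) ℝ :=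
    fromRows (fromRows A11 A21) 0 with hM1def
  set Mg : Matrix ((Fin m1 ⊕ Fin 1) ⊕ Fin m2) (Fin 1) ℝ :=
    fromRows (fromRows A12 (Matrix.of fun _ _ => a22)) A32 with hMgdef
  set M3 : Matrix ((Fin m1 ⊕ Fin 1) ⊕ Fin m2) (Fin n2) ℝ :=
    fromRows (fromRows (0 : Matrix (Fin m1) (Fin n2) ℝ) A23) A33 with hM3def
  have hA : (Matrix.fromBlocks
        (Matrix.fromBlocks A11 A12 A21 (Matrix.of fun (_ : Fin 1) (_ : Fin 1) => a22))
        (Matrix.fromRows (0 : Matrix (Fin m1) (Fin n2) ℝ) A23)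
        (Matrix.fromCols (0 : Matrix (Fin m2) (Fin n1) ℝ) A32) A33)
      = fromCols (fromCols M1 Mg) M3 := by
    ext ((i | i) | i) ((j | j) | j) <;> rfl
  rw [hA, Matrix.rank, range_fromColumns, range_fromColumns]
  set U1 := LinearMap.range M1.mulVecLin with hU1def
  set Ug := LinearMap.range Mg.mulVecLin with hUgdef
  set U3 := LinearMap.range M3.mulVecLin with hU3def
  -- normal form of members of U1 and U3
  have hU1mem : ∀ x ∈ U1, ∃ u, x = Sum.elim (Sum.elim (A11 *ᵥ u) (A21 *ᵥ u)) 0 := by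
    rintro x ⟨u, rfl⟩
    refine ⟨u, ?_⟩
    simp [hM1def, mulVecLin_apply, fromRows_mulVec]
  have hU3mem : ∀ x ∈ U3, ∃ w, x = Sum.elim (Sum.elim (0 : Fin m1 → ℝ) (A23 *ᵥ w)) (A33 *ᵥ w) := by
    rintro x ⟨w, rfl⟩
    refine ⟨w, ?_⟩
    simp [hM3def, mulVecLin_apply, fromRows_mulVec]
  set gv : (Fin m1 ⊕ Fin 1) ⊕ Fin m2 → ℝ :=
    Sum.elim (Sum.elim (fun i => A12 i 0) (fun _ => a22)) (fun i => A32 i 0) with hgvdef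
  have hUg : Ug = Submodule.span ℝ {gv} := by
    apply le_antisymm
    · rintro x ⟨cc, rfl⟩
      have hx : Mg.mulVecLin cc = cc 0 • gv := by
        funext i
        rcases i with (i | i) | i <;>
          simp [hMgdef, hgvdef, mulVecLin_apply, Matrix.mulVec, dotProduct,
            Fin.sum_univ_one, mul_comm]
      rw [hx]
      exact Submodule.smul_mem _ _ (Submodule.subset_span rfl)
    · rw [Submodule.span_le, Set.singleton_subset_iff]
      refine ⟨fun _ => 1, ?_⟩
      funext i
      rcases i with (i | i) | i <;>
        simp [hMgdef, hgvdef, mulVecLin_apply, Matrix.mulVec, dotProduct, Fin.sum_univ_one]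
  have hdisj13 : Disjoint U1 U3 := by
    rw [Submodule.disjoint_def]
    intro x hx1 hx3
    obtain ⟨u, rfl⟩ := hU1mem x hx1
    obtain ⟨w, hw⟩ := hU3mem _ hx3
    have h11 : A11 *ᵥ u = 0 := by
      funext i
      exact (congrFun hw (Sum.inl (Sum.inl i)))
    have hmidw : A21 *ᵥ u = A23 *ᵥ w := by
      funext i
      exact (congrFun hw (Sum.inl (Sum.inr i)))
    have h33 : A33 *ᵥ w = 0 := by
      funext i
      exact (congrFun hw (Sum.inr i)).symm
    have hmid : A21 *ᵥ u = 0 := by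
      rcases hk with hk1 | hk3
      · exact hk1 u h11
      · rw [hmidw]; exact hk3 w h33
    funext i
    rcases i with (i | i) | i
    · simp [h11]
    · simp [hmid]
    · simp
  have hgnot : gv ∉ U1 ⊔ U3 := by
    intro hmem
    rw [Submodule.mem_sup] at hmem
    obtain ⟨y, hy, z, hz, hyz⟩ := hmem
    obtain ⟨u, rfl⟩ := hU1mem y hy
    obtain ⟨w, rfl⟩ := hU3mem z hz
    rcases hg with hg1 | hg3
    · refine hg1 ⟨u, ?_⟩
      funext i
      have := congrFun hyz (Sum.inl (Sum.inl i))
      simpa [hgvdef] using this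
    · refine hg3 ⟨w, ?_⟩
      funext i
      have := congrFun hyz (Sum.inr i)
      simpa [hgvdef] using this
  have hgv0 : gv ≠ 0 := by
    intro h
    exact hgnot (h ▸ Submodule.zero_mem _)
  have hdisjg : Disjoint (U1 ⊔ U3) Ug := by
    rw [hUg]
    exact (Submodule.disjoint_span_singleton' hgv0).mpr hgnot
  have hre : (U1 ⊔ Ug) ⊔ U3 = (U1 ⊔ U3) ⊔ Ug := sup_right_comm U1 Ug U3
  rw [hre, finrank_sup_of_disjoint _ _ hdisjg, finrank_sup_of_disjoint _ _ hdisj13]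
  have e1 : finrank ℝ U1 = (Matrix.fromRows A11 A21).rank := by
    have : finrank ℝ U1 = M1.rank := rfl
    rw [this, hM1def, rank_fromRows_zero_right]
  have e3 : finrank ℝ U3 = (Matrix.fromRows A23 A33).rank := by
    have : finrank ℝ U3 = M3.rank := rfl
    rw [this, hM3def, rank_fromRows_mid]
  have eg : finrank ℝ Ug = 1 := by
    rw [hUg]
    exact finrank_span_singleton hgv0
  rw [e1, e3, eg]

lemma lemI
    (hz : ∃ z, A11 *ᵥ z = fun i => A12 i 0) (hv : ∃ v, v ᵥ* A11 = fun j => A21 0 j) :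
    ∃ (v : Fin m1 → ℝ) (z : Fin n1 → ℝ),
      (Matrix.fromBlocks
          (Matrix.fromBlocks A11 A12 A21 (Matrix.of fun (_ : Fin 1) (_ : Fin 1) => a22))
          (Matrix.fromRows (0 : Matrix (Fin m1) (Fin n2) ℝ) A23)
          (Matrix.fromCols (0 : Matrix (Fin m2) (Fin n1) ℝ) A32) A33).rank =
        (Matrix.fromBlocks A11 A12 A21
            (Matrix.of fun (_ : Fin 1) (_ : Fin 1) =>
              dotProduct v (Matrix.mulVec A11 z))).rank +
          (Matrix.fromBlocks
            (Matrix.of fun (_ : Fin 1) (_ : Fin 1) =>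
              a22 - dotProduct v (Matrix.mulVec A11 z))
            A23 A32 A33).rank := by
  classical
  obtain ⟨z, hz⟩ := hz
  obtain ⟨v, hv⟩ := hv
  refine ⟨v, z, ?_⟩
  set α : ℝ := dotProduct v (Matrix.mulVec A11 z) with hαdef
  set Z : Matrix (Fin n1) (Fin 1) ℝ := Matrix.of fun j _ => z j with hZdef
  set V : Matrix (Fin 1) (Fin m1) ℝ := Matrix.of fun _ i => v i with hVdef
  have hA12 : A11 * Z = A12 := by
    ext i j
    rw [Subsingleton.elim j 0]
    have h1 : (A11 * Z) i 0 = (A11 *ᵥ z) i := by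
      simp [hZdef, Matrix.mul_apply, Matrix.mulVec, dotProduct]
    rw [h1, hz]
  have hA21 : V * A11 = A21 := by
    ext i j
    rw [Subsingleton.elim i 0]
    have h1 : (V * A11) 0 j = (v ᵥ* A11) j := by
      simp [hVdef, Matrix.mul_apply, Matrix.vecMul, dotProduct]
    rw [h1, hv]
  have halpha : V * A11 * Z = Matrix.of fun (_ : Fin 1) (_ : Fin 1) => α := by
    ext i j
    rw [Subsingleton.elim i 0, Subsingleton.elim j 0]
    have h1 : (V * A11 * Z) 0 0 = (v ᵥ* A11) ⬝ᵥ z := by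
      simp [hVdef, hZdef, Matrix.mul_apply, Matrix.vecMul, dotProduct,
        Finset.sum_mul, Finset.mul_sum]
    rw [h1, hαdef, dotProduct_mulVec]
    simp
  set β : Matrix (Fin 1) (Fin 1) ℝ := Matrix.of fun _ _ => a22 - α with hβdef
  set Cα : Matrix (Fin 1 ⊕ Fin m2) (Fin 1 ⊕ Fin n2) ℝ := Matrix.fromBlocks β A23 A32 A33
    with hCαdef
  set L1 : Matrix (Fin m1 ⊕ Fin 1) (Fin m1 ⊕ Fin 1) ℝ := Matrix.fromBlocks 1 0 V 1 with hL1def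
  set R1 : Matrix (Fin n1 ⊕ Fin 1) (Fin n1 ⊕ Fin 1) ℝ := Matrix.fromBlocks 1 Z 0 1 with hR1def
  set L := Matrix.fromBlocks L1 0 0 (1 : Matrix (Fin m2) (Fin m2) ℝ) with hLdef
  set R := Matrix.fromBlocks R1 0 0 (1 : Matrix (Fin n2) (Fin n2) ℝ) with hRdef
  set D := Matrix.fromBlocks (Matrix.fromBlocks A11 0 0 β)
      (Matrix.fromRows (0 : Matrix (Fin m1) (Fin n2) ℝ) A23)
      (Matrix.fromCols (0 : Matrix (Fin m2) (Fin n1) ℝ) A32) A33 with hDdef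
  have hdetL : IsUnit L.det := by
    rw [hLdef, Matrix.det_fromBlocks_zero₁₂, hL1def, Matrix.det_fromBlocks_zero₁₂]
    simp
  have hdetR : IsUnit R.det := by
    rw [hRdef, Matrix.det_fromBlocks_zero₂₁, hR1def, Matrix.det_fromBlocks_zero₂₁]
    simp
  have hL1D11 : L1 * Matrix.fromBlocks A11 0 0 β = Matrix.fromBlocks A11 0 A21 β := by
    rw [hL1def, Matrix.fromBlocks_multiply]
    simp [hA21]
  have hL1D12 : L1 * Matrix.fromRows (0 : Matrix (Fin m1) (Fin n2) ℝ) A23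
      = Matrix.fromRows (0 : Matrix (Fin m1) (Fin n2) ℝ) A23 := by
    rw [hL1def, Matrix.fromBlocks_mul_fromRows]
    simp
  have h3 : A21 * Z = Matrix.of fun (_ : Fin 1) (_ : Fin 1) => α := by
    rw [← hA21]; exact halpha
  have hXR1 : Matrix.fromBlocks A11 0 A21 β * R1
      = Matrix.fromBlocks A11 A12 A21 (Matrix.of fun (_ : Fin 1) (_ : Fin 1) => a22) := by
    rw [hR1def, Matrix.fromBlocks_multiply, h3, hA12]
    have hc : (Matrix.of fun (_ : Fin 1) (_ : Fin 1) => α) + β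
        = Matrix.of fun (_ : Fin 1) (_ : Fin 1) => a22 := by
      ext i j
      simp [hβdef]
    simp only [Matrix.mul_one, Matrix.mul_zero, Matrix.zero_mul, add_zero, zero_add,
      Matrix.one_mul, hc]
  have hCR1 : Matrix.fromCols (0 : Matrix (Fin m2) (Fin n1) ℝ) A32 * R1
      = Matrix.fromCols (0 : Matrix (Fin m2) (Fin n1) ℝ) A32 := by
    rw [hR1def, Matrix.fromCols_mul_fromBlocks]
    simp
  have hLD : L * D = Matrix.fromBlocks (Matrix.fromBlocks A11 0 A21 β)
      (Matrix.fromRows (0 : Matrix (Fin m1) (Fin n2) ℝ) A23)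
      (Matrix.fromCols (0 : Matrix (Fin m2) (Fin n1) ℝ) A32) A33 := by
    rw [hLdef, hDdef, Matrix.fromBlocks_multiply, hL1D11, hL1D12]
    simp
  have hLDR : L * D * R =
      Matrix.fromBlocks
        (Matrix.fromBlocks A11 A12 A21 (Matrix.of fun (_ : Fin 1) (_ : Fin 1) => a22))
        (Matrix.fromRows (0 : Matrix (Fin m1) (Fin n2) ℝ) A23)
        (Matrix.fromCols (0 : Matrix (Fin m2) (Fin n1) ℝ) A32) A33 := by
    rw [hLD, hRdef, Matrix.fromBlocks_multiply, hXR1, hCR1]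
    simp
  have hrankD : D.rank = A11.rank + Cα.rank := by
    have hre : Matrix.reindex (Equiv.sumAssoc (Fin m1) (Fin 1) (Fin m2))
        (Equiv.sumAssoc (Fin n1) (Fin 1) (Fin n2)) D
        = Matrix.fromBlocks A11 (0 : Matrix (Fin m1) (Fin 1 ⊕ Fin n2) ℝ)
            (0 : Matrix (Fin 1 ⊕ Fin m2) (Fin n1) ℝ) Cα := by
      ext (i | (i | i)) (j | (j | j)) <;> rfl
    rw [← rank_reindex' (Equiv.sumAssoc (Fin m1) (Fin 1) (Fin m2))
        (Equiv.sumAssoc (Fin n1) (Fin 1) (Fin n2)) D, hre, rank_fromBlocks_diag]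
  have hrankB : (Matrix.fromBlocks A11 A12 A21
      (Matrix.of fun (_ : Fin 1) (_ : Fin 1) => α)).rank = A11.rank := by
    have h1 : L1 * Matrix.fromBlocks A11 0 0 (0 : Matrix (Fin 1) (Fin 1) ℝ)
        = Matrix.fromBlocks A11 0 A21 0 := by
      rw [hL1def, Matrix.fromBlocks_multiply]
      simp [hA21]
    have h2 : Matrix.fromBlocks A11 0 A21 (0 : Matrix (Fin 1) (Fin 1) ℝ) * R1
        = Matrix.fromBlocks A11 A12 A21 (Matrix.of fun (_ : Fin 1) (_ : Fin 1) => α) := by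
      rw [hR1def, Matrix.fromBlocks_multiply, h3, hA12]
      simp
    have hdetL1 : IsUnit L1.det := by
      rw [hL1def, Matrix.det_fromBlocks_zero₁₂]; simp
    have hdetR1 : IsUnit R1.det := by
      rw [hR1def, Matrix.det_fromBlocks_zero₂₁]; simp
    rw [← h2, ← h1, Matrix.rank_mul_eq_left_of_isUnit_det _ _ hdetR1,
      Matrix.rank_mul_eq_right_of_isUnit_det _ _ hdetL1, rank_fromBlocks_diag]
    simp
  rw [← hLDR, Matrix.rank_mul_eq_left_of_isUnit_det _ _ hdetR,
    Matrix.rank_mul_eq_right_of_isUnit_det _ _ hdetL, hrankD, hrankB]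

lemma lemIV
    (hg : (¬∃ z, A11 *ᵥ z = fun i => A12 i 0) ∨ (¬∃ y, A33 *ᵥ y = fun i => A32 i 0))
    (hk : (∃ u, A11 *ᵥ u = 0 ∧ A21 *ᵥ u ≠ 0) ∨ (∃ w, A33 *ᵥ w = 0 ∧ A23 *ᵥ w ≠ 0)) :
    (Matrix.fromBlocks
        (Matrix.fromBlocks A11 A12 A21 (Matrix.of fun (_ : Fin 1) (_ : Fin 1) => a22))
        (Matrix.fromRows (0 : Matrix (Fin m1) (Fin n2) ℝ) A23)
        (Matrix.fromCols (0 : Matrix (Fin m2) (Fin n1) ℝ) A32) A33).rank =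
      A11.rank + A33.rank + 2 := by
  classical
  set BA := (Matrix.fromBlocks
        (Matrix.fromBlocks A11 A12 A21 (Matrix.of fun (_ : Fin 1) (_ : Fin 1) => a22))
        (Matrix.fromRows (0 : Matrix (Fin m1) (Fin n2) ℝ) A23)
        (Matrix.fromCols (0 : Matrix (Fin m2) (Fin n1) ℝ) A32) A33) with hBAdef
  -- upper bound
  have hup : BA.rank ≤ A11.rank + A33.rank + 2 := by
    set D0 : Matrix ((Fin m1 ⊕ Fin 1) ⊕ Fin m2) ((Fin n1 ⊕ Fin 1) ⊕ Fin n2) ℝ :=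
      Matrix.fromBlocks (Matrix.fromBlocks A11 0 0 (0 : Matrix (Fin 1) (Fin 1) ℝ)) 0 0 A33
      with hD0def
    set Mg : Matrix ((Fin m1 ⊕ Fin 1) ⊕ Fin m2) (Fin 1) ℝ :=
      Matrix.fromRows (Matrix.fromRows A12 (Matrix.of fun _ _ => a22)) A32 with hMgdef
    set E : Matrix (Fin 1) ((Fin n1 ⊕ Fin 1) ⊕ Fin n2) ℝ :=
      Matrix.of fun _ j => Sum.elim (Sum.elim (0 : Fin n1 → ℝ) (1 : Fin 1 → ℝ))
        (0 : Fin n2 → ℝ) j with hEdef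
    set Ec : Matrix ((Fin m1 ⊕ Fin 1) ⊕ Fin m2) (Fin 1) ℝ :=
      Matrix.of fun i _ => Sum.elim (Sum.elim (0 : Fin m1 → ℝ) (1 : Fin 1 → ℝ))
        (0 : Fin m2 → ℝ) i with hEcdef
    set Rw : Matrix (Fin 1) ((Fin n1 ⊕ Fin 1) ⊕ Fin n2) ℝ :=
      Matrix.fromCols (Matrix.fromCols A21 0) A23 with hRwdef
    have hsplit : BA = D0 + Mg * E + Ec * Rw := by
      ext ((i | i) | i) ((j | j) | j) <;>
        simp [hBAdef, hD0def, hMgdef, hEdef, hEcdef, hRwdef, Matrix.mul_apply,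
          Fin.sum_univ_one, Fin.eq_zero]
    have h1 : (Mg * E).rank ≤ 1 := by
      refine (Matrix.rank_mul_le_left Mg E).trans ?_
      simpa using Matrix.rank_le_card_width Mg
    have h2 : (Ec * Rw).rank ≤ 1 := by
      refine (Matrix.rank_mul_le_left Ec Rw).trans ?_
      simpa using Matrix.rank_le_card_width Ec
    have h0 : D0.rank = A11.rank + A33.rank := by
      rw [hD0def, rank_fromBlocks_diag, rank_fromBlocks_diag]
      simp
    calc BA.rank ≤ (D0 + Mg * E).rank + (Ec * Rw).rank := by
            rw [hsplit]; exact rank_add_le _ _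
      _ ≤ D0.rank + (Mg * E).rank + (Ec * Rw).rank := by
            have := rank_add_le D0 (Mg * E)
            omega
      _ ≤ A11.rank + A33.rank + 2 := by omega
  -- lower bound
  set V := LinearMap.range BA.mulVecLin with hVdef
  have hBAmul : ∀ (x : Fin n1 → ℝ) (y : Fin 1 → ℝ) (w : Fin n2 → ℝ),
      BA.mulVecLin (Sum.elim (Sum.elim x y) w) =
        Sum.elim (Sum.elim (A11 *ᵥ x + A12 *ᵥ y)
            (A21 *ᵥ x + (Matrix.of fun (_ : Fin 1) (_ : Fin 1) => a22) *ᵥ y + A23 *ᵥ w))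
          (A32 *ᵥ y + A33 *ᵥ w) := by
    intro x y w
    funext i
    rcases i with (i | i) | i <;>
      simp [hBAdef, mulVecLin_apply, Matrix.fromBlocks_mulVec, Matrix.fromRows_mulVec,
        Matrix.fromCols_mulVec_sumElim, add_assoc]
  have ha22mul : ∀ y : Fin 1 → ℝ,
      (Matrix.of fun (_ : Fin 1) (_ : Fin 1) => a22) *ᵥ y = fun _ => a22 * y 0 := by
    intro y
    funext i
    simp [Matrix.mulVec, dotProduct, Fin.sum_univ_one]
  have hA12mul : A12 *ᵥ (fun _ => (1:ℝ)) = fun i => A12 i 0 := by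
    funext i; simp [Matrix.mulVec, dotProduct, Fin.sum_univ_one]
  have hA32mul : A32 *ᵥ (fun _ => (1:ℝ)) = fun i => A32 i 0 := by
    funext i; simp [Matrix.mulVec, dotProduct, Fin.sum_univ_one]
  -- middle direction vector
  have hemex : ∃ cv : Fin 1 → ℝ, cv 0 ≠ 0 ∧
      Sum.elim (Sum.elim (0 : Fin m1 → ℝ) cv) (0 : Fin m2 → ℝ) ∈ V := by
    rcases hk with ⟨u0, h0, hne⟩ | ⟨w0, h0, hne⟩
    · refine ⟨A21 *ᵥ u0, ?_, ?_⟩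
      · intro hz
        apply hne
        funext i
        rw [Subsingleton.elim i 0]
        exact hz
      · refine ⟨Sum.elim (Sum.elim u0 0) 0, ?_⟩
        rw [hBAmul]
        simp [h0]
    · refine ⟨A23 *ᵥ w0, ?_, ?_⟩
      · intro hz
        apply hne
        funext i
        rw [Subsingleton.elim i 0]
        exact hz
      · refine ⟨Sum.elim (Sum.elim 0 0) w0, ?_⟩
        rw [hBAmul]
        simp [h0]
  obtain ⟨cv, hcv, hemV⟩ := hemex
  set ev : (Fin m1 ⊕ Fin 1) ⊕ Fin m2 → ℝ :=
    Sum.elim (Sum.elim (0 : Fin m1 → ℝ) cv) (0 : Fin m2 → ℝ) with hevdef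
  set gm : (Fin m1 ⊕ Fin 1) ⊕ Fin m2 → ℝ :=
    Sum.elim (Sum.elim (fun i => A12 i 0) (0 : Fin 1 → ℝ)) (fun i => A32 i 0) with hgmdef
  set M1 : Matrix ((Fin m1 ⊕ Fin 1) ⊕ Fin m2) (Fin n1) ℝ :=
    Matrix.fromRows (Matrix.fromRows A11 (0 : Matrix (Fin 1) (Fin n1) ℝ)) 0 with hM1def
  set M3 : Matrix ((Fin m1 ⊕ Fin 1) ⊕ Fin m2) (Fin n2) ℝ :=
    Matrix.fromRows (0 : Matrix (Fin m1 ⊕ Fin 1) (Fin n2) ℝ) A33 with hM3def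
  set W1 := LinearMap.range M1.mulVecLin with hW1def
  set W3 := LinearMap.range M3.mulVecLin with hW3def
  set Wg : Submodule ℝ ((Fin m1 ⊕ Fin 1) ⊕ Fin m2 → ℝ) := Submodule.span ℝ {gm} with hWgdef
  set We : Submodule ℝ ((Fin m1 ⊕ Fin 1) ⊕ Fin m2 → ℝ) := Submodule.span ℝ {ev} with hWedef
  have hM1mul : ∀ u, M1.mulVecLin u
      = Sum.elim (Sum.elim (A11 *ᵥ u) (0 : Fin 1 → ℝ)) (0 : Fin m2 → ℝ) := by
    intro u
    funext i
    rcases i with (i | i) | i <;> simp [hM1def, mulVecLin_apply, Matrix.fromRows_mulVec]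
  have hM3mul : ∀ w, M3.mulVecLin w
      = Sum.elim (Sum.elim (0 : Fin m1 → ℝ) (0 : Fin 1 → ℝ)) (A33 *ᵥ w) := by
    intro w
    funext i
    rcases i with (i | i) | i <;> simp [hM3def, mulVecLin_apply, Matrix.fromRows_mulVec]
  have hW1V : W1 ≤ V := by
    rintro x ⟨u, rfl⟩
    have key : M1.mulVecLin u
        = BA.mulVecLin (Sum.elim (Sum.elim u 0) 0) - ((A21 *ᵥ u) 0 / cv 0) • ev := by
      rw [hM1mul, hBAmul]
      funext i
      rcases i with (i | i) | i
      · simp [hevdef]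
      · rw [Subsingleton.elim i 0]
        simp [hevdef, ha22mul]
        field_simp
        ring
      · simp [hevdef]
    rw [key]
    exact Submodule.sub_mem _ ⟨_, rfl⟩ (Submodule.smul_mem _ _ hemV)
  have hW3V : W3 ≤ V := by
    rintro x ⟨w, rfl⟩
    have key : M3.mulVecLin w
        = BA.mulVecLin (Sum.elim (Sum.elim 0 0) w) - ((A23 *ᵥ w) 0 / cv 0) • ev := by
      rw [hM3mul, hBAmul]
      funext i
      rcases i with (i | i) | i
      · simp [hevdef]
      · rw [Subsingleton.elim i 0]
        simp [hevdef, ha22mul]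
        field_simp
        ring
      · simp [hevdef]
    rw [key]
    exact Submodule.sub_mem _ ⟨_, rfl⟩ (Submodule.smul_mem _ _ hemV)
  have hgmV : gm ∈ V := by
    have key : gm = BA.mulVecLin (Sum.elim (Sum.elim 0 (fun _ => 1)) 0)
        - (a22 / cv 0) • ev := by
      rw [hBAmul]
      funext i
      rcases i with (i | i) | i
      · simp [hgmdef, hevdef, hA12mul]
      · rw [Subsingleton.elim i 0]
        simp [hgmdef, hevdef, ha22mul]
        field_simp
        ring
      · simp [hgmdef, hevdef, hA32mul]
    rw [key]
    exact Submodule.sub_mem _ ⟨_, rfl⟩ (Submodule.smul_mem _ _ hemV)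
  -- nonvanishing
  have hgm0 : gm ≠ 0 := by
    intro h
    rcases hg with hg1 | hg3
    · refine hg1 ⟨0, ?_⟩
      funext i
      have := congrFun h (Sum.inl (Sum.inl i))
      simp [hgmdef] at this
      simp [Matrix.mulVec_zero, this]
    · refine hg3 ⟨0, ?_⟩
      funext i
      have := congrFun h (Sum.inr i)
      simp [hgmdef] at this
      simp [Matrix.mulVec_zero, this]
  have hev0 : ev ≠ 0 := by
    intro h
    exact hcv (congrFun h (Sum.inl (Sum.inr 0)))
  -- disjointness
  have d13 : Disjoint W1 W3 := by
    rw [Submodule.disjoint_def]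
    rintro x ⟨u, rfl⟩ ⟨w, hw⟩
    rw [hM1mul] at hw ⊢
    rw [hM3mul] at hw
    funext i
    rcases i with (i | i) | i
    · exact (congrFun hw (Sum.inl (Sum.inl i))).symm
    · simp
    · simp
  have hmem13 : ∀ x ∈ W1 ⊔ W3, ∃ u w,
      x = Sum.elim (Sum.elim (A11 *ᵥ u) (0 : Fin 1 → ℝ)) (A33 *ᵥ w) := by
    intro x hx
    rw [Submodule.mem_sup] at hx
    obtain ⟨y, ⟨u, rfl⟩, z, ⟨w, rfl⟩, rfl⟩ := hx
    refine ⟨u, w, ?_⟩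
    rw [hM1mul, hM3mul]
    funext i
    rcases i with (i | i) | i <;> simp
  have dg : Disjoint (W1 ⊔ W3) Wg := by
    rw [hWgdef, Submodule.disjoint_span_singleton' hgm0]
    intro hmem
    obtain ⟨u, w, hx⟩ := hmem13 gm hmem
    rcases hg with hg1 | hg3
    · refine hg1 ⟨u, ?_⟩
      funext i
      exact (congrFun hx (Sum.inl (Sum.inl i))).symm
    · refine hg3 ⟨w, ?_⟩
      funext i
      exact (congrFun hx (Sum.inr i)).symm
  have de : Disjoint ((W1 ⊔ W3) ⊔ Wg) We := by
    rw [hWedef, Submodule.disjoint_span_singleton' hev0]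
    intro hmem
    rw [Submodule.mem_sup] at hmem
    obtain ⟨y, hy, z, hz, hyz⟩ := hmem
    obtain ⟨u, w, rfl⟩ := hmem13 y hy
    rw [hWgdef, Submodule.mem_span_singleton] at hz
    obtain ⟨t, rfl⟩ := hz
    have := congrFun hyz (Sum.inl (Sum.inr 0))
    simp [hgmdef, hevdef] at this
    exact hcv this.symm
  -- dimension count
  have hWWV : ((W1 ⊔ W3) ⊔ Wg) ⊔ We ≤ V := by
    refine sup_le (sup_le (sup_le hW1V hW3V) ?_) ?_
    · rw [hWgdef, Submodule.span_le, Set.singleton_subset_iff]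
      exact hgmV
    · rw [hWedef, Submodule.span_le, Set.singleton_subset_iff]
      exact hemV
  have hrank1 : finrank ℝ W1 = A11.rank := by
    have : finrank ℝ W1 = M1.rank := rfl
    rw [this, hM1def, rank_fromRows_zero_right, rank_fromRows_zero_right]
  have hrank3 : finrank ℝ W3 = A33.rank := by
    have : finrank ℝ W3 = M3.rank := rfl
    rw [this, hM3def, rank_fromRows_zero_left]
  have hlow : A11.rank + A33.rank + 2 ≤ BA.rank := by
    have hfr : finrank ℝ (((W1 ⊔ W3) ⊔ Wg) ⊔ We : Submodule ℝ _)
        = A11.rank + A33.rank + 2 := by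
      rw [finrank_sup_of_disjoint _ _ de, finrank_sup_of_disjoint _ _ dg,
        finrank_sup_of_disjoint _ _ d13, hrank1, hrank3, hWgdef, hWedef,
        finrank_span_singleton hgm0, finrank_span_singleton hev0]
    have hmono := Submodule.finrank_mono hWWV
    rw [hfr] at hmono
    exact hmono
  omega

lemma lemIII
    (hg : (¬∃ v, v ᵥ* A11 = fun j => A21 0 j) ∨ (¬∃ w, w ᵥ* A33 = fun j => A23 0 j))
    (hk : (∀ v, v ᵥ* A11 = 0 → v ᵥ* A12 = 0) ∨ (∀ w, w ᵥ* A33 = 0 → w ᵥ* A32 = 0)) :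
    (Matrix.fromBlocks
        (Matrix.fromBlocks A11 A12 A21 (Matrix.of fun (_ : Fin 1) (_ : Fin 1) => a22))
        (Matrix.fromRows (0 : Matrix (Fin m1) (Fin n2) ℝ) A23)
        (Matrix.fromCols (0 : Matrix (Fin m2) (Fin n1) ℝ) A32) A33).rank =
      (Matrix.fromCols A11 A12).rank + (Matrix.fromCols A32 A33).rank + 1 := by
  classical
  have hg' : (¬∃ z, A11ᵀ *ᵥ z = fun i => A21ᵀ i 0) ∨ (¬∃ y, A33ᵀ *ᵥ y = fun i => A23ᵀ i 0) := by
    rcases hg with h | h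
    · left
      intro ⟨v, hv⟩
      exact h ⟨v, by simpa [Matrix.mulVec_transpose] using hv⟩
    · right
      intro ⟨w, hw⟩
      exact h ⟨w, by simpa [Matrix.mulVec_transpose] using hw⟩
  have hk' : (∀ u, A11ᵀ *ᵥ u = 0 → A12ᵀ *ᵥ u = 0) ∨
      (∀ w, A33ᵀ *ᵥ w = 0 → A32ᵀ *ᵥ w = 0) := by
    rcases hk with h | h
    · left
      intro u hu
      simpa [Matrix.mulVec_transpose] using h u (by simpa [Matrix.mulVec_transpose] using hu)
    · right
      intro w hw
      simpa [Matrix.mulVec_transpose] using h w (by simpa [Matrix.mulVec_transpose] using hw)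
  have hII := lemII n1 m1 n2 m2 A11ᵀ A21ᵀ A12ᵀ a22 A32ᵀ A23ᵀ A33ᵀ hg' hk'
  have htr : (Matrix.fromBlocks
        (Matrix.fromBlocks A11ᵀ A21ᵀ A12ᵀ (Matrix.of fun (_ : Fin 1) (_ : Fin 1) => a22))
        (Matrix.fromRows (0 : Matrix (Fin n1) (Fin m2) ℝ) A32ᵀ)
        (Matrix.fromCols (0 : Matrix (Fin n2) (Fin m1) ℝ) A23ᵀ) A33ᵀ)
      = (Matrix.fromBlocks
        (Matrix.fromBlocks A11 A12 A21 (Matrix.of fun (_ : Fin 1) (_ : Fin 1) => a22))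
        (Matrix.fromRows (0 : Matrix (Fin m1) (Fin n2) ℝ) A23)
        (Matrix.fromCols (0 : Matrix (Fin m2) (Fin n1) ℝ) A32) A33)ᵀ := by
    ext ((i | i) | i) ((j | j) | j) <;> rfl
  rw [htr, Matrix.rank_transpose, ← Matrix.transpose_fromCols A11 A12,
    ← Matrix.transpose_fromCols A32 A33, Matrix.rank_transpose, Matrix.rank_transpose]
    at hII
  exact hII

end LemII

end OneSepAux

/-- Decomposition lemma: for a real matrix with a 1-separation, at least one of the
four rank decompositions holds. -/
theorem rank_one_separation_cases (m1 n1 m2 n2 : ℕ)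
    (A11 : Matrix (Fin m1) (Fin n1) ℝ) (A12 : Matrix (Fin m1) (Fin 1) ℝ)
    (A21 : Matrix (Fin 1) (Fin n1) ℝ) (a22 : ℝ)
    (A23 : Matrix (Fin 1) (Fin n2) ℝ) (A32 : Matrix (Fin m2) (Fin 1) ℝ)
    (A33 : Matrix (Fin m2) (Fin n2) ℝ) :
    (∃ (v : Fin m1 → ℝ) (z : Fin n1 → ℝ),
      (Matrix.fromBlocks
          (Matrix.fromBlocks A11 A12 A21 (Matrix.of fun (_ : Fin 1) (_ : Fin 1) => a22))
          (Matrix.fromRows (0 : Matrix (Fin m1) (Fin n2) ℝ) A23)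
          (Matrix.fromCols (0 : Matrix (Fin m2) (Fin n1) ℝ) A32) A33).rank =
        (Matrix.fromBlocks A11 A12 A21
            (Matrix.of fun (_ : Fin 1) (_ : Fin 1) =>
              dotProduct v (Matrix.mulVec A11 z))).rank +
          (Matrix.fromBlocks
            (Matrix.of fun (_ : Fin 1) (_ : Fin 1) =>
              a22 - dotProduct v (Matrix.mulVec A11 z))
            A23 A32 A33).rank) ∨
    (Matrix.fromBlocks
        (Matrix.fromBlocks A11 A12 A21 (Matrix.of fun (_ : Fin 1) (_ : Fin 1) => a22))
        (Matrix.fromRows (0 : Matrix (Fin m1) (Fin n2) ℝ) A23)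
        (Matrix.fromCols (0 : Matrix (Fin m2) (Fin n1) ℝ) A32) A33).rank =
      (Matrix.fromRows A11 A21).rank + (Matrix.fromRows A23 A33).rank + 1 ∨
    (Matrix.fromBlocks
        (Matrix.fromBlocks A11 A12 A21 (Matrix.of fun (_ : Fin 1) (_ : Fin 1) => a22))
        (Matrix.fromRows (0 : Matrix (Fin m1) (Fin n2) ℝ) A23)
        (Matrix.fromCols (0 : Matrix (Fin m2) (Fin n1) ℝ) A32) A33).rank =
      (Matrix.fromCols A11 A12).rank + (Matrix.fromCols A32 A33).rank + 1 ∨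
    (Matrix.fromBlocks
        (Matrix.fromBlocks A11 A12 A21 (Matrix.of fun (_ : Fin 1) (_ : Fin 1) => a22))
        (Matrix.fromRows (0 : Matrix (Fin m1) (Fin n2) ℝ) A23)
        (Matrix.fromCols (0 : Matrix (Fin m2) (Fin n1) ℝ) A32) A33).rank =
      A11.rank + A33.rank + 2 := by
  classical
  set c1 : Prop := ∃ z, A11 *ᵥ z = fun i => A12 i 0 with hc1def
  set r1 : Prop := ∃ v, v ᵥ* A11 = fun j => A21 0 j with hr1def
  set c3 : Prop := ∃ y, A33 *ᵥ y = fun i => A32 i 0 with hc3def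
  set r3 : Prop := ∃ w, w ᵥ* A33 = fun j => A23 0 j with hr3def
  set k1 : Prop := ∀ u, A11 *ᵥ u = 0 → A21 *ᵥ u = 0 with hk1def
  set k3 : Prop := ∀ w, A33 *ᵥ w = 0 → A23 *ᵥ w = 0 with hk3def
  set kc1 : Prop := ∀ v, v ᵥ* A11 = 0 → v ᵥ* A12 = 0 with hkc1def
  set kc3 : Prop := ∀ w, w ᵥ* A33 = 0 → w ᵥ* A32 = 0 with hkc3def
  by_cases h1 : c1 ∧ r1
  · exact Or.inl (OneSepAux.lemI m1 n1 m2 n2 A11 A12 A21 a22 A23 A32 A33 h1.1 h1.2)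
  by_cases hII : (¬c1 ∨ ¬c3) ∧ (k1 ∨ k3)
  · exact Or.inr (Or.inl
      (OneSepAux.lemII m1 n1 m2 n2 A11 A12 A21 a22 A23 A32 A33 hII.1 hII.2))
  by_cases hIII : (¬r1 ∨ ¬r3) ∧ (kc1 ∨ kc3)
  · exact Or.inr (Or.inr (Or.inl
      (OneSepAux.lemIII m1 n1 m2 n2 A11 A12 A21 a22 A23 A32 A33 hIII.1 hIII.2)))
  -- derive hypotheses for case (iv)
  have hcc : ¬c1 ∨ ¬c3 := by
    by_contra h
    push_neg at h
    obtain ⟨hc1, hc3⟩ := h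
    obtain ⟨z, hz⟩ := hc1
    obtain ⟨y, hy⟩ := hc3
    have hkc1 : kc1 := by
      intro v hv
      funext i
      rw [Subsingleton.elim i 0]
      have h2 : (v ᵥ* A12) 0 = v ⬝ᵥ (A11 *ᵥ z) := by
        rw [hz]
        simp [Matrix.vecMul, dotProduct]
      rw [h2, dotProduct_mulVec, hv]
      simp
    have hkc3 : kc3 := by
      intro w hw
      funext i
      rw [Subsingleton.elim i 0]
      have h2 : (w ᵥ* A32) 0 = w ⬝ᵥ (A33 *ᵥ y) := by
        rw [hy]
        simp [Matrix.vecMul, dotProduct]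
      rw [h2, dotProduct_mulVec, hw]
      simp
    have hnr1 : ¬r1 := fun hr => h1 ⟨⟨z, hz⟩, hr⟩
    exact hIII ⟨Or.inl hnr1, Or.inl hkc1⟩
  have hkk : ¬k1 ∧ ¬k3 := by
    by_contra h
    rw [not_and_or, not_not, not_not] at h
    rcases h with h | h
    · exact hII ⟨hcc, Or.inl h⟩
    · exact hII ⟨hcc, Or.inr h⟩
  have hex : (∃ u, A11 *ᵥ u = 0 ∧ A21 *ᵥ u ≠ 0) ∨ (∃ w, A33 *ᵥ w = 0 ∧ A23 *ᵥ w ≠ 0) := by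
    left
    have := hkk.1
    rw [hk1def] at this
    push_neg at this
    exact this
  exact Or.inr (Or.inr (Or.inr
    (OneSepAux.lemIV m1 n1 m2 n2 A11 A12 A21 a22 A23 A32 A33 hcc hex)))
end

section
/- Let C = [[C11, C12, 0],[C21, c22, C23],[0, C32, C33]] be any real matrix with the 1-separation block structure. Then rank([C11; C21]) + rank([C23; C33]) + 1 ≥ rank(C), where [C11; C21] and [C23; C33] denote vertical concatenations. -/
open Matrix

lemma my_rank_add_le {m n : Type*} [Fintype m] [Fintype n] (A B : Matrix m n ℝ) :
    (A + B).rank ≤ A.rank + B.rank := by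
  classical
  rw [Matrix.rank, Matrix.rank, Matrix.rank, Matrix.mulVecLin_add]
  have h : LinearMap.range (A.mulVecLin + B.mulVecLin) ≤
      LinearMap.range A.mulVecLin ⊔ LinearMap.range B.mulVecLin := by
    rintro x ⟨v, rfl⟩
    exact Submodule.add_mem_sup ⟨v, rfl⟩ ⟨v, rfl⟩
  exact (Submodule.finrank_mono h).trans
    (Submodule.finrank_add_le_finrank_add_finrank _ _)

set_option maxHeartbeats 1000000 in
/-- For any real matrix with the 1-separation block structure,
`rank [C11; C21] + rank [C23; C33] + 1 ≥ rank C`. -/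
theorem rank_le_rows_blocks_add_one (m1 n1 m2 n2 : ℕ)
    (C11 : Matrix (Fin m1) (Fin n1) ℝ) (C12 : Matrix (Fin m1) (Fin 1) ℝ)
    (C21 : Matrix (Fin 1) (Fin n1) ℝ) (c22 : ℝ)
    (C23 : Matrix (Fin 1) (Fin n2) ℝ) (C32 : Matrix (Fin m2) (Fin 1) ℝ)
    (C33 : Matrix (Fin m2) (Fin n2) ℝ) :
    (Matrix.fromBlocks
        (Matrix.fromBlocks C11 C12 C21 (Matrix.of fun (_ : Fin 1) (_ : Fin 1) => c22))
        (Matrix.fromRows (0 : Matrix (Fin m1) (Fin n2) ℝ) C23)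
        (Matrix.fromCols (0 : Matrix (Fin m2) (Fin n1) ℝ) C32) C33).rank ≤
      (Matrix.fromRows C11 C21).rank + (Matrix.fromRows C23 C33).rank + 1 := by
  classical
  set L : Matrix (Fin m1 ⊕ Fin 1) (Fin n1) ℝ := Matrix.fromRows C11 C21 with hL
  set R : Matrix (Fin 1 ⊕ Fin m2) (Fin n2) ℝ := Matrix.fromRows C23 C33 with hR
  -- selection matrices
  set P1 : Matrix ((Fin m1 ⊕ Fin 1) ⊕ Fin m2) (Fin m1 ⊕ Fin 1) ℝ :=
    Matrix.fromRows 1 0 with hP1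
  set Q1 : Matrix (Fin n1) ((Fin n1 ⊕ Fin 1) ⊕ Fin n2) ℝ :=
    Matrix.fromCols (Matrix.fromCols 1 0) 0 with hQ1
  set P2 : Matrix ((Fin m1 ⊕ Fin 1) ⊕ Fin m2) (Fin 1 ⊕ Fin m2) ℝ :=
    Matrix.fromRows (Matrix.fromRows 0 (Matrix.fromCols 1 0)) (Matrix.fromCols 0 1) with hP2
  set Q2 : Matrix (Fin n2) ((Fin n1 ⊕ Fin 1) ⊕ Fin n2) ℝ :=
    Matrix.fromCols 0 1 with hQ2
  set u : Matrix ((Fin m1 ⊕ Fin 1) ⊕ Fin m2) (Fin 1) ℝ :=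
    Matrix.fromRows (Matrix.fromRows C12 (Matrix.of fun (_ : Fin 1) (_ : Fin 1) => c22)) C32 with hu
  set v : Matrix (Fin 1) ((Fin n1 ⊕ Fin 1) ⊕ Fin n2) ℝ :=
    Matrix.fromCols (Matrix.fromCols 0 1) 0 with hv
  have hdecomp :
      (Matrix.fromBlocks
        (Matrix.fromBlocks C11 C12 C21 (Matrix.of fun (_ : Fin 1) (_ : Fin 1) => c22))
        (Matrix.fromRows (0 : Matrix (Fin m1) (Fin n2) ℝ) C23)
        (Matrix.fromCols (0 : Matrix (Fin m2) (Fin n1) ℝ) C32) C33)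
        = P1 * L * Q1 + P2 * R * Q2 + u * v := by
    ext i j
    rcases i with (i | i) | i <;> rcases j with (j | j) | j <;>
      simp [hP1, hQ1, hP2, hQ2, hu, hv, hL, hR, Matrix.mul_apply, Matrix.fromBlocks,
        Matrix.one_apply, Fintype.sum_sum_type,
        Finset.mul_sum, Fin.sum_univ_succ, Fin.fin_one_eq_zero]
  rw [hdecomp]
  have h1 : (P1 * L * Q1).rank ≤ L.rank :=
    le_trans (Matrix.rank_mul_le_left (P1 * L) Q1) (Matrix.rank_mul_le_right P1 L)
  have h2 : (P2 * R * Q2).rank ≤ R.rank :=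
    le_trans (Matrix.rank_mul_le_left (P2 * R) Q2) (Matrix.rank_mul_le_right P2 R)
  have h3 : (u * v).rank ≤ 1 := by
    refine le_trans (Matrix.rank_mul_le_left u v) ?_
    simpa using Matrix.rank_le_card_width u
  calc (P1 * L * Q1 + P2 * R * Q2 + u * v).rank
      ≤ (P1 * L * Q1 + P2 * R * Q2).rank + (u * v).rank := my_rank_add_le _ _
    _ ≤ (P1 * L * Q1).rank + (P2 * R * Q2).rank + (u * v).rank := by
        exact add_le_add_left (my_rank_add_le _ _) _
    _ ≤ L.rank + R.rank + 1 := by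
        exact add_le_add (add_le_add h1 h2) h3
end
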